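/- Define P̃_C = Σ_{i=r+1}^{r+s} (1−σ̂_i²)⁻¹ Ẑ_i Ẑ_iᵀ − Σ_{i=r+1}^{r+s} σ̂_i(1−σ̂_i²)⁻¹ Ẑ_i W̆_iᵀ + Σ_{i=r+s+1}^{p} Ẑ_i Ẑ_iᵀ and P̃_N = Σ_{i=r+1}^{r+s} (1−σ̂_i²)⁻¹ W̆_i W̆_iᵀ − Σ_{i=r+1}^{r+s} σ̂_i(1−σ̂_i²)⁻¹ W̆_i Ẑ_iᵀ + Σ_{i=r+s+1}^{K} W̆_i W̆_iᵀ. Then max{‖P̂_C − P̃_C‖, ‖P̂_N − P̃_N‖} ≤ 16τ/(1 − σ_{r+1})². -/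

import Mathlib

open Matrix
open scoped Matrix.Norms.L2Operator

noncomputable def specNorm {m n : Type*} [Fintype m] [Fintype n] [DecidableEq n]
    (A : Matrix m n ℝ) : ℝ :=
  ‖LinearMap.toContinuousLinearMap (Matrix.toEuclideanLin A)‖

noncomputable def vnorm {n : Type*} [Fintype n] (v : n → ℝ) : ℝ :=
  Real.sqrt (∑ i, v i ^ 2)

section helperlemmas
variable {m k : ℕ}

lemma specNorm_eq_norm (A : Matrix (Fin m) (Fin k) ℝ) : specNorm A = ‖A‖ := rfl

lemma specNorm_nonneg (A : Matrix (Fin m) (Fin k) ℝ) : 0 ≤ specNorm A := by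
  rw [specNorm_eq_norm]; exact norm_nonneg _

lemma norm_wlp_symm (y : Fin m → ℝ) :
    ‖(WithLp.equiv 2 (Fin m → ℝ)).symm y‖ = Real.sqrt (∑ a, y a ^ 2) := by
  rw [EuclideanSpace.norm_eq]
  congr 1
  exact Finset.sum_congr rfl fun i _ => by simp [Real.norm_eq_abs, sq_abs]

lemma mulVec_norm_le (A : Matrix (Fin m) (Fin k) ℝ) (x : Fin k → ℝ) :
    Real.sqrt (∑ a, (A *ᵥ x) a ^ 2) ≤ specNorm A * Real.sqrt (∑ i, x i ^ 2) := by
  have h := Matrix.l2_opNorm_mulVec A ((WithLp.equiv 2 (Fin k → ℝ)).symm x)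
  simp only [WithLp.equiv_symm_apply] at h
  rw [specNorm_eq_norm, ← norm_wlp_symm x, ← norm_wlp_symm (A *ᵥ x)]
  simpa using h

lemma specNorm_le_of (A : Matrix (Fin m) (Fin k) ℝ) (c : ℝ) (hc : 0 ≤ c)
    (h : ∀ x : Fin k → ℝ, Real.sqrt (∑ a, (A *ᵥ x) a ^ 2) ≤ c * Real.sqrt (∑ i, x i ^ 2)) :
    specNorm A ≤ c := by
  refine ContinuousLinearMap.opNorm_le_bound _ hc fun x => ?_
  set x0 : Fin k → ℝ := (WithLp.equiv 2 (Fin k → ℝ)) x with hx0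
  have hx : x = (WithLp.equiv 2 (Fin k → ℝ)).symm x0 := by simp [hx0]
  rw [hx]
  have happ : (LinearMap.toContinuousLinearMap (Matrix.toEuclideanLin A))
      ((WithLp.equiv 2 (Fin k → ℝ)).symm x0) = (WithLp.equiv 2 (Fin m → ℝ)).symm (A *ᵥ x0) := rfl
  rw [happ, norm_wlp_symm, norm_wlp_symm]
  exact h x0

lemma specNorm_transpose (A : Matrix (Fin m) (Fin k) ℝ) : specNorm Aᵀ = specNorm A := by
  rw [specNorm_eq_norm, specNorm_eq_norm, ← Matrix.l2_opNorm_conjTranspose A]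
  congr 1

lemma sum_sq_eq_dot (y : Fin m → ℝ) : ∑ a, y a ^ 2 = y ⬝ᵥ y := by
  simp [dotProduct, sq]

lemma mulVec_isometry (A : Matrix (Fin m) (Fin k) ℝ) (h : Aᵀ * A = 1) (x : Fin k → ℝ) :
    ∑ a, (A *ᵥ x) a ^ 2 = ∑ i, x i ^ 2 := by
  rw [sum_sq_eq_dot, sum_sq_eq_dot]
  calc (A *ᵥ x) ⬝ᵥ (A *ᵥ x) = ((A *ᵥ x) ᵥ* A) ⬝ᵥ x := by rw [Matrix.dotProduct_mulVec]
    _ = ((x ᵥ* Aᵀ) ᵥ* A) ⬝ᵥ x := by rw [Matrix.vecMul_transpose]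
    _ = (x ᵥ* (Aᵀ * A)) ⬝ᵥ x := by rw [Matrix.vecMul_vecMul]
    _ = x ⬝ᵥ x := by rw [h, Matrix.vecMul_one]

lemma transpose_contraction (A : Matrix (Fin m) (Fin k) ℝ) (h : Aᵀ * A = 1) (y : Fin m → ℝ) :
    ∑ i, (Aᵀ *ᵥ y) i ^ 2 ≤ ∑ a, y a ^ 2 := by
  set t := ∑ i, (Aᵀ *ᵥ y) i ^ 2 with ht
  have htnn : 0 ≤ t := Finset.sum_nonneg fun i _ => sq_nonneg _
  have hA : ∑ a, (A *ᵥ (Aᵀ *ᵥ y)) a ^ 2 = t := mulVec_isometry A h _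
  have hdot : t = ∑ a, y a * (A *ᵥ (Aᵀ *ᵥ y)) a := by
    rw [ht, sum_sq_eq_dot]
    have h1 : (Aᵀ *ᵥ y) ⬝ᵥ (Aᵀ *ᵥ y) = ((Aᵀ *ᵥ y) ᵥ* Aᵀ) ⬝ᵥ y := by
      rw [Matrix.dotProduct_mulVec]
    rw [h1]
    have h2 : (Aᵀ *ᵥ y) ᵥ* Aᵀ = A *ᵥ (Aᵀ *ᵥ y) := by
      rw [← Matrix.mulVec_transpose, Matrix.transpose_transpose]
    rw [h2, dotProduct_comm]
    simp [dotProduct]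
  have hcs := Finset.sum_mul_sq_le_sq_mul_sq Finset.univ y (fun a => (A *ᵥ (Aᵀ *ᵥ y)) a)
  rw [← hdot] at hcs
  have hcs' : t ^ 2 ≤ (∑ a, y a ^ 2) * t := by
    calc t ^ 2 ≤ (∑ a, y a ^ 2) * (∑ a, (A *ᵥ (Aᵀ *ᵥ y)) a ^ 2) := hcs
      _ = (∑ a, y a ^ 2) * t := by rw [hA]
  rcases eq_or_lt_of_le htnn with h0 | h0
  · rw [← h0]; exact Finset.sum_nonneg fun a _ => sq_nonneg _
  · nlinarith

lemma norm_wlp_symm' (y : Fin m → ℝ) :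
    ‖(WithLp.equiv 2 (Fin m → ℝ)).symm y‖ = Real.sqrt (∑ a, y a ^ 2) := norm_wlp_symm y

lemma sqrt_sum_sq_add_le (x y : Fin m → ℝ) :
    Real.sqrt (∑ a, (x a + y a) ^ 2)
      ≤ Real.sqrt (∑ a, x a ^ 2) + Real.sqrt (∑ a, y a ^ 2) := by
  have h := norm_add_le ((WithLp.equiv 2 (Fin m → ℝ)).symm x) ((WithLp.equiv 2 (Fin m → ℝ)).symm y)
  have he : (WithLp.equiv 2 (Fin m → ℝ)).symm x + (WithLp.equiv 2 (Fin m → ℝ)).symm y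
      = (WithLp.equiv 2 (Fin m → ℝ)).symm (fun a => x a + y a) := rfl
  rw [he, norm_wlp_symm, norm_wlp_symm, norm_wlp_symm] at h
  exact h

lemma fin_sum_delta (d t : ℕ) (f : Fin d → ℝ) :
    (∑ m : Fin d, if t = (m : ℕ) then f m else 0) = if h : t < d then f ⟨t, h⟩ else 0 := by
  by_cases h : t < d
  · rw [dif_pos h, Finset.sum_eq_single (⟨t, h⟩ : Fin d)]
    · simp
    · intro j _ hj
      have : t ≠ (j : ℕ) := fun he => hj (by apply Fin.ext; simp [← he])
      simp [this]
    · simp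
  · rw [dif_neg h, Finset.sum_eq_zero]
    intro j _
    have : t ≠ (j : ℕ) := by have := j.2; omega
    simp [this]

end helperlemmas
section helperlemmas2

lemma rdiag_mulVec' {p K : ℕ} (σv : ℕ → ℝ) (y : Fin K → ℝ) (i : Fin p) :
    ((Matrix.of fun (i : Fin p) (j : Fin K) => if (i:ℕ) = (j:ℕ) then σv (i:ℕ) else 0)
      *ᵥ y) i = if h : (i:ℕ) < K then σv i.1 * y ⟨i.1, h⟩ else 0 := by
  simp only [Matrix.mulVec, dotProduct, Matrix.of_apply]
  by_cases h : (i : ℕ) < K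
  · rw [dif_pos h, Finset.sum_eq_single (⟨i.1, h⟩ : Fin K)]
    · simp
    · intro j _ hj
      have : (i : ℕ) ≠ (j : ℕ) := fun he => hj (by apply Fin.ext; simp [← he])
      simp [this]
    · simp
  · rw [dif_neg h, Finset.sum_eq_zero]
    intro j _
    have : (i : ℕ) ≠ (j : ℕ) := by have := j.2; omega
    simp [this]

lemma rdiag_sq_bound {p K : ℕ} (σv : ℕ → ℝ) (c : ℝ)
    (hb : ∀ t, |σv t| ≤ c) (y : Fin K → ℝ) :
    ∑ i, (((Matrix.of fun (i : Fin p) (j : Fin K) =>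
        if (i:ℕ) = (j:ℕ) then σv (i:ℕ) else 0) *ᵥ y) i) ^ 2 ≤ c ^ 2 * ∑ j, y j ^ 2 := by
  have h1 : ∀ i : Fin p, (((Matrix.of fun (i : Fin p) (j : Fin K) =>
      if (i:ℕ) = (j:ℕ) then σv (i:ℕ) else 0) *ᵥ y) i) ^ 2
      ≤ c ^ 2 * (if h : (i:ℕ) < K then y ⟨i.1, h⟩ ^ 2 else 0) := by
    intro i
    rw [rdiag_mulVec']
    by_cases h : (i:ℕ) < K
    · rw [dif_pos h, dif_pos h, mul_pow]
      have hab := hb i.1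
      have h2 : σv i.1 ^ 2 ≤ c ^ 2 := by
        have := abs_le.mp hab; nlinarith
      nlinarith [sq_nonneg (y ⟨i.1, h⟩)]
    · rw [dif_neg h, dif_neg h]; simp
  have hc : 0 ≤ c := le_trans (abs_nonneg _) (hb 0)
  calc ∑ i, (((Matrix.of fun (i : Fin p) (j : Fin K) =>
        if (i:ℕ) = (j:ℕ) then σv (i:ℕ) else 0) *ᵥ y) i) ^ 2
      ≤ ∑ i : Fin p, c ^ 2 * (if h : (i:ℕ) < K then y ⟨i.1, h⟩ ^ 2 else 0) :=
        Finset.sum_le_sum fun i _ => h1 i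
    _ = c ^ 2 * ∑ i : Fin p, (if h : (i:ℕ) < K then y ⟨i.1, h⟩ ^ 2 else 0) := by
        rw [Finset.mul_sum]
    _ ≤ c ^ 2 * ∑ j, y j ^ 2 := by
        apply mul_le_mul_of_nonneg_left _ (by positivity)
        have h3 : ∑ i : Fin p, (if h : (i:ℕ) < K then y ⟨i.1, h⟩ ^ 2 else 0)
            = ∑ t ∈ Finset.range p, (if h : t < K then y ⟨t, h⟩ ^ 2 else 0) :=
          Fin.sum_univ_eq_sum_range (fun t => if h : t < K then y ⟨t, h⟩ ^ 2 else 0) p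
        have h4 : ∑ j : Fin K, y j ^ 2
            = ∑ t ∈ Finset.range K, (if h : t < K then y ⟨t, h⟩ ^ 2 else 0) := by
          rw [← Fin.sum_univ_eq_sum_range (fun t => if h : t < K then y ⟨t, h⟩ ^ 2 else 0) K]
          exact Finset.sum_congr rfl fun j _ => by rw [dif_pos j.2]
        rw [h3, h4]
        by_cases hpK : p ≤ K
        · exact Finset.sum_le_sum_of_subset_of_nonneg (Finset.range_subset_range.mpr hpK)
            (fun t _ _ => by by_cases h : t < K <;> simp [h, sq_nonneg])
        · refine le_of_eq ((Finset.sum_subset (Finset.range_subset_range.mpr (le_of_not_ge hpK))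
            (fun t _ htn => ?_)).symm)
          rw [dif_neg (by simpa using htn)]

lemma diagFactor {p K L : ℕ} (d : ℕ) (hdp : d ≤ p) (hdK : d ≤ K)
    (σv : ℕ → ℝ) (hz : ∀ t, d ≤ t → σv t = 0)
    (Uu : Matrix (Fin p) (Fin p) ℝ) (X : Matrix (Fin K) (Fin L) ℝ) :
    Uu * (Matrix.of fun (i : Fin p) (j : Fin K) =>
        if (i:ℕ) = (j:ℕ) then σv (i:ℕ) else 0) * X
      = (Matrix.of fun (i : Fin p) (j : Fin d) =>
          σv j.1 * Uu i ⟨j.1, lt_of_lt_of_le j.2 hdp⟩)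
        * (Matrix.of fun (j : Fin d) (l : Fin L) => X ⟨j.1, lt_of_lt_of_le j.2 hdK⟩ l) := by
  ext i l
  rw [Matrix.mul_assoc]
  have hDX : ∀ t : Fin p, ((Matrix.of fun (i : Fin p) (j : Fin K) =>
      if (i:ℕ) = (j:ℕ) then σv (i:ℕ) else 0) * X) t l
      = if h : (t:ℕ) < K then σv t.1 * X ⟨t.1, h⟩ l else 0 := by
    intro t
    have := rdiag_mulVec' (p := p) (K := K) σv (fun j => X j l) t
    simpa [Matrix.mulVec, dotProduct, Matrix.mul_apply] using this
  have hL : (Uu * ((Matrix.of fun (i : Fin p) (j : Fin K) =>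
      if (i:ℕ) = (j:ℕ) then σv (i:ℕ) else 0) * X)) i l
      = ∑ t : Fin p, Uu i t * (if h : (t:ℕ) < K then σv t.1 * X ⟨t.1, h⟩ l else 0) := by
    rw [Matrix.mul_apply]
    exact Finset.sum_congr rfl fun t _ => by rw [hDX t]
  rw [hL]
  set F : ℕ → ℝ := fun t => (if ht : t < p then Uu i ⟨t, ht⟩ else 0)
      * (if h : t < K then σv t * X ⟨t, h⟩ l else 0) with hF
  have h1 : ∑ t : Fin p, Uu i t * (if h : (t:ℕ) < K then σv t.1 * X ⟨t.1, h⟩ l else 0)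
      = ∑ t ∈ Finset.range p, F t := by
    rw [← Fin.sum_univ_eq_sum_range F p]
    refine Finset.sum_congr rfl fun t _ => ?_
    simp only [hF]
    rw [dif_pos t.2]
  have h2 : ∑ t ∈ Finset.range p, F t = ∑ t ∈ Finset.range d, F t := by
    refine (Finset.sum_subset (Finset.range_subset_range.mpr hdp) fun t _ htn => ?_).symm
    have htd : d ≤ t := by simpa using htn
    simp only [hF]
    rw [hz t htd]
    by_cases h : t < K <;> simp [h]
  rw [h1, h2, Matrix.mul_apply, ← Fin.sum_univ_eq_sum_range F d]
  refine Finset.sum_congr rfl fun j _ => ?_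
  simp only [hF, Matrix.of_apply]
  rw [dif_pos (lt_of_lt_of_le j.2 hdp), dif_pos (lt_of_lt_of_le j.2 hdK)]
  ring

end helperlemmas2
lemma rdiag_mulVec {p K : ℕ} (σv cnat : ℕ → ℝ) (hc : ∀ t, K ≤ t → cnat t = 0)
    (i : Fin p) :
    ((Matrix.of fun (i : Fin p) (j : Fin K) => if (i:ℕ) = (j:ℕ) then σv (i:ℕ) else 0)
      *ᵥ (fun j : Fin K => cnat j.1)) i = σv i.1 * cnat i.1 := by
  simp only [Matrix.mulVec, dotProduct, Matrix.of_apply]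
  by_cases h : (i : ℕ) < K
  · rw [Finset.sum_eq_single (⟨i.1, h⟩ : Fin K)]
    · simp
    · intro j _ hj
      have : (i : ℕ) ≠ (j : ℕ) := fun he => hj (by apply Fin.ext; simp [← he])
      simp [this]
    · simp
  · rw [Finset.sum_eq_zero, (hc i.1 (le_of_not_gt h)), mul_zero]
    intro j _
    have : (i : ℕ) ≠ (j : ℕ) := by
      have := j.2; omega
    simp [this]

set_option maxHeartbeats 1000000 in
lemma sv_key (p K k : ℕ) (hkp : k < p) (hkK : k < K)
    (σh : ℕ → ℝ) (hanti : ∀ i j, i ≤ j → σh j ≤ σh i) (hnn : ∀ i, 0 ≤ σh i)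
    (Uh : Matrix (Fin p) (Fin p) ℝ) (Vh : Matrix (Fin K) (Fin K) ℝ)
    (hUh : Uhᵀ * Uh = 1) (hVh : Vhᵀ * Vh = 1)
    (Mm : Matrix (Fin p) (Fin K) ℝ)
    (hMm : Mm = Uh * (Matrix.of fun (i : Fin p) (j : Fin K) =>
        if (i:ℕ) = (j:ℕ) then σh (i:ℕ) else 0) * Vhᵀ)
    (P : Matrix (Fin p) (Fin k) ℝ) (Q : Matrix (Fin k) (Fin K) ℝ)
    (G : Matrix (Fin p) (Fin K) ℝ)
    (hdec : Mm = P * Q + G) (β : ℝ) (hβ : 0 ≤ β)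
    (hG : ∀ v : Fin K → ℝ,
      Real.sqrt (∑ a, (G *ᵥ v) a ^ 2) ≤ β * Real.sqrt (∑ j, v j ^ 2)) :
    σh k ≤ β := by
  classical
  set D : Matrix (Fin p) (Fin K) ℝ :=
    (Matrix.of fun (i : Fin p) (j : Fin K) =>
        if (i:ℕ) = (j:ℕ) then σh (i:ℕ) else 0) with hD
  -- the extension-by-zero linear map
  have hkK' : k + 1 ≤ K := hkK
  have hkp' : k + 1 ≤ p := hkp
  let ext : (Fin (k+1) → ℝ) → ℕ → ℝ := fun c t => if h : t < k+1 then c ⟨t, h⟩ else 0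
  let eK : (Fin (k+1) → ℝ) → (Fin K → ℝ) := fun c j => ext c j.1
  have heKadd : ∀ c d, eK (c + d) = eK c + eK d := by
    intro c d; funext j; simp only [eK, ext, Pi.add_apply]
    by_cases h : (j:ℕ) < k+1 <;> simp [h]
  have heKsmul : ∀ (t : ℝ) c, eK (t • c) = t • eK c := by
    intro t c; funext j; simp only [eK, ext, Pi.smul_apply, smul_eq_mul]
    by_cases h : (j:ℕ) < k+1 <;> simp [h]
  let L : (Fin (k+1) → ℝ) →ₗ[ℝ] (Fin k → ℝ) :=
    { toFun := fun c => Q *ᵥ (Vh *ᵥ eK c)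
      map_add' := by
        intro c d; rw [heKadd, Matrix.mulVec_add, Matrix.mulVec_add]
      map_smul' := by
        intro t c; rw [heKsmul, Matrix.mulVec_smul, Matrix.mulVec_smul]; rfl }
  have hni : ¬ Function.Injective L := by
    intro hinj
    have h1 := LinearMap.finrank_le_finrank_of_injective hinj
    rw [Module.finrank_fin_fun, Module.finrank_fin_fun] at h1
    omega
  rw [Function.not_injective_iff] at hni
  obtain ⟨a, b, hab, hne⟩ := hni
  set c : Fin (k+1) → ℝ := a - b with hcdef
  have hc0 : c ≠ 0 := sub_ne_zero.mpr hne
  have hLc : L c = 0 := by rw [map_sub, hab, sub_self]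
  set cnat : ℕ → ℝ := ext c with hcnat
  have hcz : ∀ t, k + 1 ≤ t → cnat t = 0 := by
    intro t ht; simp only [hcnat, ext]; rw [dif_neg (by omega)]
  set e : Fin K → ℝ := fun j => cnat j.1 with he
  have heeK : e = eK c := rfl
  set v : Fin K → ℝ := Vh *ᵥ e with hv
  -- sums
  have hcnn : ∀ t, 0 ≤ cnat t ^ 2 := fun t => sq_nonneg _
  have hesum : ∑ j : Fin K, e j ^ 2 = ∑ i : Fin (k+1), c i ^ 2 := by
    have h1 : ∑ j : Fin K, e j ^ 2 = ∑ t ∈ Finset.range K, cnat t ^ 2 :=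
      Fin.sum_univ_eq_sum_range (fun t => cnat t ^ 2) K
    have h2 : ∑ t ∈ Finset.range K, cnat t ^ 2 = ∑ t ∈ Finset.range (k+1), cnat t ^ 2 := by
      refine (Finset.sum_subset (Finset.range_subset_range.mpr hkK') ?_).symm
      intro t _ htn
      rw [hcz t (by simpa using htn)]; ring
    have h3 : ∑ t ∈ Finset.range (k+1), cnat t ^ 2 = ∑ i : Fin (k+1), c i ^ 2 := by
      rw [← Fin.sum_univ_eq_sum_range (fun t => cnat t ^ 2) (k+1)]
      refine Finset.sum_congr rfl fun i _ => ?_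
      have : cnat i.1 = c i := by simp only [hcnat, ext]; rw [dif_pos i.2]
      rw [this]
    rw [h1, h2, h3]
  have hvsum : ∑ a, v a ^ 2 = ∑ i : Fin (k+1), c i ^ 2 := by
    rw [hv, mulVec_isometry Vh hVh e, hesum]
  -- Mm *ᵥ v = G *ᵥ v
  have hQv : Q *ᵥ v = 0 := hLc
  have hMv : Mm *ᵥ v = G *ᵥ v := by
    rw [hdec, Matrix.add_mulVec, ← Matrix.mulVec_mulVec, hQv, Matrix.mulVec_zero, zero_add]
  -- Mm *ᵥ v = Uh *ᵥ (D *ᵥ e)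
  have hMv2 : Mm *ᵥ v = Uh *ᵥ (D *ᵥ e) := by
    rw [hMm, hv, Matrix.mulVec_mulVec, Matrix.mul_assoc (Uh * D) Vhᵀ Vh, hVh, Matrix.mul_one,
      ← Matrix.mulVec_mulVec]
  have hDe : ∀ i : Fin p, (D *ᵥ e) i = σh i.1 * cnat i.1 := by
    intro i
    exact rdiag_mulVec σh cnat (fun t ht => hcz t (by omega)) i
  have hMsum : ∑ a, (Mm *ᵥ v) a ^ 2 = ∑ i : Fin p, (σh i.1 * cnat i.1) ^ 2 := by
    rw [hMv2, mulVec_isometry Uh hUh]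
    exact Finset.sum_congr rfl fun i _ => by rw [hDe i]
  -- lower bound
  have hlow : σh k ^ 2 * (∑ i : Fin (k+1), c i ^ 2) ≤ ∑ a, (Mm *ᵥ v) a ^ 2 := by
    rw [hMsum]
    have h1 : ∑ i : Fin p, (σh i.1 * cnat i.1) ^ 2
        = ∑ t ∈ Finset.range p, (σh t * cnat t) ^ 2 :=
      Fin.sum_univ_eq_sum_range (fun t => (σh t * cnat t) ^ 2) p
    have h2 : ∑ t ∈ Finset.range (k+1), (σh t * cnat t) ^ 2
        ≤ ∑ t ∈ Finset.range p, (σh t * cnat t) ^ 2 :=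
      Finset.sum_le_sum_of_subset_of_nonneg (Finset.range_subset_range.mpr hkp')
        (fun t _ _ => sq_nonneg _)
    have h3 : σh k ^ 2 * (∑ i : Fin (k+1), c i ^ 2)
        ≤ ∑ t ∈ Finset.range (k+1), (σh t * cnat t) ^ 2 := by
      rw [Finset.mul_sum]
      have h4 : ∑ i : Fin (k+1), σh k ^ 2 * c i ^ 2
          = ∑ t ∈ Finset.range (k+1), σh k ^ 2 * cnat t ^ 2 := by
        rw [← Fin.sum_univ_eq_sum_range (fun t => σh k ^ 2 * cnat t ^ 2) (k+1)]
        refine Finset.sum_congr rfl fun i _ => ?_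
        have : cnat i.1 = c i := by simp only [hcnat, ext]; rw [dif_pos i.2]
        rw [this]
      rw [h4]
      refine Finset.sum_le_sum fun t ht => ?_
      have htk : t ≤ k := by simpa [Nat.lt_succ_iff] using Finset.mem_range.mp ht
      have h5 : σh k ≤ σh t := hanti t k htk
      have h6 : 0 ≤ σh k := hnn k
      rw [mul_pow]
      have : σh k ^ 2 ≤ σh t ^ 2 := by nlinarith
      nlinarith [sq_nonneg (cnat t)]
    exact le_trans h3 (h1 ▸ h2)
  -- upper bound
  have hup : ∑ a, (Mm *ᵥ v) a ^ 2 ≤ β ^ 2 * (∑ i : Fin (k+1), c i ^ 2) := by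
    rw [hMv]
    have h1 := hG v
    have hA : (0:ℝ) ≤ ∑ a, (G *ᵥ v) a ^ 2 := Finset.sum_nonneg fun a _ => sq_nonneg _
    have hB : (0:ℝ) ≤ ∑ j, v j ^ 2 := Finset.sum_nonneg fun a _ => sq_nonneg _
    have h2 : Real.sqrt (∑ a, (G *ᵥ v) a ^ 2) ^ 2 ≤ (β * Real.sqrt (∑ j, v j ^ 2)) ^ 2 := by
      apply pow_le_pow_left₀ (Real.sqrt_nonneg _) h1
    rw [Real.sq_sqrt hA, mul_pow, Real.sq_sqrt hB] at h2
    rw [← hvsum]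
    exact h2
  -- conclude
  have hS : 0 < ∑ i : Fin (k+1), c i ^ 2 := by
    have : ∃ i, c i ≠ 0 := Function.ne_iff.mp hc0
    obtain ⟨i0, hi0⟩ := this
    refine Finset.sum_pos' (fun i _ => sq_nonneg _) ⟨i0, Finset.mem_univ _, ?_⟩
    positivity
  have hsq : σh k ^ 2 ≤ β ^ 2 := by
    have := le_trans hlow hup
    exact le_of_mul_le_mul_right (by linarith [this]) hS
  have := hnn k
  nlinarith
set_option maxHeartbeats 800000 in
lemma core_bound (n : ℕ) (I : Finset ℕ) (zc wc : ℕ → Fin n → ℝ) (g h : ℕ → ℝ)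
    (c1 c2 : ℝ) (hc1 : 0 ≤ c1) (hc2 : 0 ≤ c2)
    (horth : ∀ i ∈ I, ∀ j ∈ I, (∑ a, zc i a * zc j a) = if i = j then 1 else 0)
    (hz : ∀ x : Fin n → ℝ, ∑ i ∈ I, (∑ b, zc i b * x b) ^ 2 ≤ ∑ b, x b ^ 2)
    (hw : ∀ x : Fin n → ℝ, ∑ i ∈ I, (∑ b, wc i b * x b) ^ 2 ≤ ∑ b, x b ^ 2)
    (hg : ∀ i ∈ I, |g i| ≤ c1) (hh : ∀ i ∈ I, |h i| ≤ c2) :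
    specNorm (Matrix.of fun a b : Fin n =>
        ∑ i ∈ I, (g i * (zc i a * zc i b) - h i * (zc i a * wc i b)))
      ≤ Real.sqrt (2 * (c1 ^ 2 + c2 ^ 2)) := by
  refine specNorm_le_of _ _ (Real.sqrt_nonneg _) fun x => ?_
  set γ : ℕ → ℝ := fun i => g i * (∑ b, zc i b * x b) - h i * (∑ b, wc i b * x b) with hγ
  have hEx : ∀ a, ((Matrix.of fun a b : Fin n =>
      ∑ i ∈ I, (g i * (zc i a * zc i b) - h i * (zc i a * wc i b))) *ᵥ x) a
      = ∑ i ∈ I, γ i * zc i a := by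
    intro a
    simp only [Matrix.mulVec, dotProduct, Matrix.of_apply]
    have h1 : ∀ b, (∑ i ∈ I, (g i * (zc i a * zc i b) - h i * (zc i a * wc i b))) * x b
        = ∑ i ∈ I, (g i * (zc i a * zc i b) - h i * (zc i a * wc i b)) * x b :=
      fun b => by rw [Finset.sum_mul]
    rw [Finset.sum_congr rfl fun b _ => h1 b, Finset.sum_comm]
    refine Finset.sum_congr rfl fun i _ => ?_
    have h2 : ∀ b, (g i * (zc i a * zc i b) - h i * (zc i a * wc i b)) * x b
        = zc i a * (g i * (zc i b * x b) - h i * (wc i b * x b)) := fun b => by ring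
    rw [Finset.sum_congr rfl fun b _ => h2 b, ← Finset.mul_sum]
    have h3 : ∑ b, (g i * (zc i b * x b) - h i * (wc i b * x b))
        = g i * (∑ b, zc i b * x b) - h i * (∑ b, wc i b * x b) := by
      rw [Finset.sum_sub_distrib, ← Finset.mul_sum, ← Finset.mul_sum]
    rw [h3, hγ]; ring
  have hsq : ∑ a, ((Matrix.of fun a b : Fin n =>
      ∑ i ∈ I, (g i * (zc i a * zc i b) - h i * (zc i a * wc i b))) *ᵥ x) a ^ 2
      = ∑ i ∈ I, γ i ^ 2 := by
    rw [Finset.sum_congr rfl fun a _ => by rw [hEx a, sq]]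
    have h4 : ∀ a : Fin n, (∑ i ∈ I, γ i * zc i a) * (∑ j ∈ I, γ j * zc j a)
        = ∑ i ∈ I, ∑ j ∈ I, (γ i * zc i a) * (γ j * zc j a) := fun a =>
      Finset.sum_mul_sum I I _ _
    rw [Finset.sum_congr rfl fun a _ => h4 a, Finset.sum_comm]
    refine Finset.sum_congr rfl fun i hi => ?_
    rw [Finset.sum_comm]
    have h5 : ∀ j ∈ I, ∑ a, (γ i * zc i a) * (γ j * zc j a)
        = γ i * γ j * (if i = j then 1 else 0) := by
      intro j hj
      rw [← horth i hi j hj, Finset.mul_sum]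
      exact Finset.sum_congr rfl fun a _ => by ring
    rw [Finset.sum_congr rfl h5, Finset.sum_eq_single i]
    · simp [sq]
    · intro j _ hji; simp [Ne.symm hji]
    · intro hiI; exact absurd hi hiI
  have hγb : ∑ i ∈ I, γ i ^ 2 ≤ (c1 ^ 2 + c2 ^ 2) * (2 * ∑ b, x b ^ 2) := by
    have h6 : ∀ i ∈ I, γ i ^ 2 ≤ (c1 ^ 2 + c2 ^ 2) *
        ((∑ b, zc i b * x b) ^ 2 + (∑ b, wc i b * x b) ^ 2) := by
      intro i hi
      obtain ⟨hg1, hg2⟩ := abs_le.mp (hg i hi)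
      obtain ⟨hh1, hh2⟩ := abs_le.mp (hh i hi)
      have hgsq : g i ^ 2 ≤ c1 ^ 2 := by nlinarith
      have hhsq : h i ^ 2 ≤ c2 ^ 2 := by nlinarith
      set A := ∑ b, zc i b * x b with hA
      set B := ∑ b, wc i b * x b with hB
      have hγi : γ i = g i * A - h i * B := rfl
      rw [hγi]
      have e1 : g i ^ 2 * (A ^ 2 + B ^ 2) ≤ c1 ^ 2 * (A ^ 2 + B ^ 2) :=
        mul_le_mul_of_nonneg_right hgsq (by positivity)
      have e2 : h i ^ 2 * (A ^ 2 + B ^ 2) ≤ c2 ^ 2 * (A ^ 2 + B ^ 2) :=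
        mul_le_mul_of_nonneg_right hhsq (by positivity)
      nlinarith [sq_nonneg (g i * B + h i * A)]
    calc ∑ i ∈ I, γ i ^ 2
        ≤ ∑ i ∈ I, (c1 ^ 2 + c2 ^ 2) *
          ((∑ b, zc i b * x b) ^ 2 + (∑ b, wc i b * x b) ^ 2) := Finset.sum_le_sum h6
      _ = (c1 ^ 2 + c2 ^ 2) * ((∑ i ∈ I, (∑ b, zc i b * x b) ^ 2)
            + ∑ i ∈ I, (∑ b, wc i b * x b) ^ 2) := by
          rw [← Finset.mul_sum, Finset.sum_add_distrib]
      _ ≤ (c1 ^ 2 + c2 ^ 2) * (2 * ∑ b, x b ^ 2) := by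
          have := hz x; have := hw x
          have hcc : (0:ℝ) ≤ c1 ^ 2 + c2 ^ 2 := by positivity
          nlinarith
  rw [hsq] at *
  have hfin : ∑ i ∈ I, γ i ^ 2 ≤ (2 * (c1 ^ 2 + c2 ^ 2)) * ∑ b, x b ^ 2 := by linarith [hγb]
  calc Real.sqrt (∑ i ∈ I, γ i ^ 2)
      ≤ Real.sqrt ((2 * (c1 ^ 2 + c2 ^ 2)) * ∑ b, x b ^ 2) := Real.sqrt_le_sqrt hfin
    _ = Real.sqrt (2 * (c1 ^ 2 + c2 ^ 2)) * Real.sqrt (∑ b, x b ^ 2) :=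
        Real.sqrt_mul (by positivity) _
lemma coeff1 (u t : ℝ) (h0 : 0 ≤ u) (h1 : u ≤ t) (h2 : t ≤ 1/40) :
    |(1 - u^2)⁻¹ - 1| ≤ 2*t := by
  have ht0 : 0 ≤ t := le_trans h0 h1
  have hd : (1:ℝ)/2 ≤ 1 - u^2 := by nlinarith
  have hdpos : (0:ℝ) < 1 - u^2 := by linarith
  have hid : (1 - u^2) * (1-u^2)⁻¹ = 1 := mul_inv_cancel₀ (ne_of_gt hdpos)
  have hinn : 0 ≤ (1-u^2)⁻¹ := inv_nonneg.mpr (le_of_lt hdpos)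
  have hi2 : (1-u^2)⁻¹ ≤ 2 := by
    have := inv_anti₀ (by norm_num : (0:ℝ) < 1/2) hd
    simpa using this
  rw [abs_le]
  constructor
  · nlinarith
  · nlinarith
lemma coeff2 (u t : ℝ) (h0 : 0 ≤ u) (h1 : u ≤ t) (h2 : t ≤ 1/40) :
    |u * (1 - u^2)⁻¹| ≤ 2*t := by
  have ht0 : 0 ≤ t := le_trans h0 h1
  have hd : (1:ℝ)/2 ≤ 1 - u^2 := by nlinarith
  have hdpos : (0:ℝ) < 1 - u^2 := by linarith
  have hinn : 0 ≤ (1-u^2)⁻¹ := inv_nonneg.mpr (le_of_lt hdpos)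
  have hi2 : (1-u^2)⁻¹ ≤ 2 := by
    have := inv_anti₀ (by norm_num : (0:ℝ) < 1/2) hd
    simpa using this
  rw [abs_le]
  constructor
  · nlinarith
  · nlinarith
set_option maxHeartbeats 4000000 in
theorem stmt_7
    (n p K r s : ℕ) (hs : 1 ≤ s) (hrp : r + s ≤ p) (hrK : r + s ≤ K)
    (hpn : p ≤ n) (hKn : K ≤ n)
    (Z : Matrix (Fin n) (Fin p) ℝ) (W : Matrix (Fin n) (Fin K) ℝ)
    (hZ : Zᵀ * Z = 1) (hW : Wᵀ * W = 1)
    (U : Matrix (Fin p) (Fin p) ℝ) (V : Matrix (Fin K) (Fin K) ℝ)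
    (hU : Uᵀ * U = 1) (hV : Vᵀ * V = 1)
    (σ : ℕ → ℝ)
    (hσone : ∀ i, i < r → σ i = 1)
    (hσlt : σ r < 1)
    (hσanti : ∀ i j, i ≤ j → σ j ≤ σ i)
    (hσpos : 0 < σ (r + s - 1))
    (hσzero : ∀ i, r + s ≤ i → σ i = 0)
    (hSVD : Zᵀ * W
      = U * (Matrix.of fun (i : Fin p) (j : Fin K) =>
          if (i : ℕ) = (j : ℕ) then σ (i : ℕ) else 0) * Vᵀ)
    (Zt : Matrix (Fin n) (Fin p) ℝ) (hZt : Zt = Z * U)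
    (Wt : Matrix (Fin n) (Fin K) ℝ) (hWt : Wt = W * V)
    (What : Matrix (Fin n) (Fin K) ℝ) (hWhat : Whatᵀ * What = 1)
    (Uh : Matrix (Fin p) (Fin p) ℝ) (Vh : Matrix (Fin K) (Fin K) ℝ)
    (hUh : Uhᵀ * Uh = 1) (hVh : Vhᵀ * Vh = 1)
    (σh : ℕ → ℝ)
    (hσhanti : ∀ i j, i ≤ j → σh j ≤ σh i)
    (hσhnonneg : ∀ i, 0 ≤ σh i)
    (hSVDh : Zᵀ * What
      = Uh * (Matrix.of fun (i : Fin p) (j : Fin K) =>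
          if (i : ℕ) = (j : ℕ) then σh (i : ℕ) else 0) * Vhᵀ)
    (Zh : Matrix (Fin n) (Fin p) ℝ) (hZh : Zh = Z * Uh)
    (Wbr : Matrix (Fin n) (Fin K) ℝ) (hWbr : Wbr = What * Vh)
    (τ : ℝ) (hτ : τ = specNorm ((What * Whatᵀ - W * Wᵀ) * Z))
    (hgap : 40 * τ ≤ min ((1 - σ r) ^ 2) (σ (r + s - 1) ^ 2))
    (Mh : Matrix (Fin n) (Fin (p - r) ⊕ Fin (K - r)) ℝ)
    (hMhl : ∀ (a : Fin n) (j : Fin (p - r)),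
      Mh a (Sum.inl j) = Zh a ⟨r + j.1, by have := j.2; omega⟩)
    (hMhr : ∀ (a : Fin n) (j : Fin (K - r)),
      Mh a (Sum.inr j) = Wbr a ⟨r + j.1, by have := j.2; omega⟩)
    (PRh PCh PNh : Matrix (Fin n) (Fin n) ℝ)
    (hPRh : PRh = ∑ i ∈ (Finset.range r).attach,
      Matrix.vecMulVec
        (fun a : Fin n => Zh a ⟨i.1, by have := Finset.mem_range.mp i.2; omega⟩)
        (fun a : Fin n => Zh a ⟨i.1, by have := Finset.mem_range.mp i.2; omega⟩))
    (hPCh : PCh = (Matrix.of fun (a : Fin n) (j : Fin (p - r) ⊕ Fin (K - r)) =>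
        Sum.elim (fun j' : Fin (p - r) => Zh a ⟨r + j'.1, by have := j'.2; omega⟩)
                 (fun _ : Fin (K - r) => (0 : ℝ)) j) * (Mhᵀ * Mh)⁻¹ * Mhᵀ)
    (hPNh : PNh = (Matrix.of fun (a : Fin n) (j : Fin (p - r) ⊕ Fin (K - r)) =>
        Sum.elim (fun _ : Fin (p - r) => (0 : ℝ))
                 (fun j' : Fin (K - r) => Wbr a ⟨r + j'.1, by have := j'.2; omega⟩) j)
        * (Mhᵀ * Mh)⁻¹ * Mhᵀ)
    (PCt PNt : Matrix (Fin n) (Fin n) ℝ)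
    (hPCt : PCt = (∑ i ∈ (Finset.Ico r (r + s)).attach,
            (1 - σh i.1 ^ 2)⁻¹ • Matrix.vecMulVec
              (fun a : Fin n => Zh a ⟨i.1, by have := (Finset.mem_Ico.mp i.2).2; omega⟩)
              (fun a : Fin n => Zh a ⟨i.1, by have := (Finset.mem_Ico.mp i.2).2; omega⟩))
       - (∑ i ∈ (Finset.Ico r (r + s)).attach,
            (σh i.1 / (1 - σh i.1 ^ 2)) • Matrix.vecMulVec
              (fun a : Fin n => Zh a ⟨i.1, by have := (Finset.mem_Ico.mp i.2).2; omega⟩)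
              (fun a : Fin n => Wbr a ⟨i.1, by have := (Finset.mem_Ico.mp i.2).2; omega⟩))
       + (∑ i ∈ (Finset.Ico (r + s) p).attach,
            Matrix.vecMulVec
              (fun a : Fin n => Zh a ⟨i.1, (Finset.mem_Ico.mp i.2).2⟩)
              (fun a : Fin n => Zh a ⟨i.1, (Finset.mem_Ico.mp i.2).2⟩)))
    (hPNt : PNt = (∑ i ∈ (Finset.Ico r (r + s)).attach,
            (1 - σh i.1 ^ 2)⁻¹ • Matrix.vecMulVec
              (fun a : Fin n => Wbr a ⟨i.1, by have := (Finset.mem_Ico.mp i.2).2; omega⟩)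
              (fun a : Fin n => Wbr a ⟨i.1, by have := (Finset.mem_Ico.mp i.2).2; omega⟩))
       - (∑ i ∈ (Finset.Ico r (r + s)).attach,
            (σh i.1 / (1 - σh i.1 ^ 2)) • Matrix.vecMulVec
              (fun a : Fin n => Wbr a ⟨i.1, by have := (Finset.mem_Ico.mp i.2).2; omega⟩)
              (fun a : Fin n => Zh a ⟨i.1, by have := (Finset.mem_Ico.mp i.2).2; omega⟩))
       + (∑ i ∈ (Finset.Ico (r + s) K).attach,
            Matrix.vecMulVec
              (fun a : Fin n => Wbr a ⟨i.1, (Finset.mem_Ico.mp i.2).2⟩)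
              (fun a : Fin n => Wbr a ⟨i.1, (Finset.mem_Ico.mp i.2).2⟩))) :
    specNorm (PCh - PCt) ≤ 16 * τ / (1 - σ r) ^ 2
    ∧ specNorm (PNh - PNt) ≤ 16 * τ / (1 - σ r) ^ 2 := by

  classical
  have hτ0 : 0 ≤ τ := by rw [hτ]; exact specNorm_nonneg _
  have hσr0 : 0 < σ r := lt_of_lt_of_le hσpos (hσanti r (r+s-1) (by omega))
  have hσgap : 40 * τ ≤ (1 - σ r)^2 := le_trans hgap (min_le_left _ _)
  have h1σ : 0 < 1 - σ r := by linarith [hσlt]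
  have h1σle : 1 - σ r ≤ 1 := by linarith
  have hτ40 : τ ≤ 1/40 := by nlinarith
  have hτ1σ : τ < 1 - σ r := by nlinarith
  have hσnn : ∀ i, 0 ≤ σ i := by
    intro i
    by_cases h : i < r + s
    · exact le_of_lt (lt_of_lt_of_le hσpos (hσanti i (r+s-1) (by omega)))
    · rw [hσzero i (by omega)]
  have hσler : ∀ i, r ≤ i → σ i ≤ σ r := fun i hi => hσanti r i hi
  have hVV : V * Vᵀ = 1 := mul_eq_one_comm.mp hV
  have hZZ : Zhᵀ * Zh = 1 := by
    rw [hZh, Matrix.transpose_mul]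
    simp only [← Matrix.mul_assoc]
    rw [Matrix.mul_assoc Uhᵀ Zᵀ Z, hZ, Matrix.mul_one, hUh]
  have hWW : Wbrᵀ * Wbr = 1 := by
    rw [hWbr, Matrix.transpose_mul]
    simp only [← Matrix.mul_assoc]
    rw [Matrix.mul_assoc Vhᵀ Whatᵀ What, hWhat, Matrix.mul_one, hVh]
  have hZW : Zhᵀ * Wbr
      = Matrix.of (fun (i : Fin p) (j : Fin K) =>
          if (i:ℕ) = (j:ℕ) then σh (i:ℕ) else 0) := by
    rw [hZh, hWbr, Matrix.transpose_mul]
    have h1 : Uhᵀ * Zᵀ * (What * Vh) = Uhᵀ * (Zᵀ * What) * Vh := by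
      simp only [Matrix.mul_assoc]
    rw [h1, hSVDh]
    simp only [← Matrix.mul_assoc]
    rw [hUh, Matrix.one_mul, Matrix.mul_assoc _ Vhᵀ Vh, hVh, Matrix.mul_one]
  -- decomposition  Zᵀ * What = U * Σm * X + Gτ
  set X : Matrix (Fin K) (Fin K) ℝ := Vᵀ * (Wᵀ * What) with hX
  set T : Matrix (Fin n) (Fin p) ℝ := (What * Whatᵀ - W * Wᵀ) * Z with hT
  set Gτ : Matrix (Fin p) (Fin K) ℝ := Tᵀ * What with hGτdef
  have hmain : Zᵀ * What
      = U * (Matrix.of fun (i : Fin p) (j : Fin K) =>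
          if (i : ℕ) = (j : ℕ) then σ (i : ℕ) else 0) * X + Gτ := by
    rw [hGτdef, hT, hX]
    have h2 : U * (Matrix.of fun (i : Fin p) (j : Fin K) =>
        if (i : ℕ) = (j : ℕ) then σ (i : ℕ) else 0) * (Vᵀ * (Wᵀ * What))
        = (Zᵀ * W) * (Wᵀ * What) := by
      rw [hSVD]; simp only [Matrix.mul_assoc]
    rw [h2]
    have h3 : ((What * Whatᵀ - W * Wᵀ) * Z)ᵀ * What
        = Zᵀ * (What * Whatᵀ - W * Wᵀ) * What := by
      rw [Matrix.transpose_mul]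
      congr 1
      rw [Matrix.transpose_sub, Matrix.transpose_mul, Matrix.transpose_mul,
        Matrix.transpose_transpose, Matrix.transpose_transpose]
    have h4 : Zᵀ * (What * Whatᵀ) * What = Zᵀ * What := by
      simp only [Matrix.mul_assoc]
      rw [hWhat, Matrix.mul_one]
    have h5 : Zᵀ * (W * Wᵀ) * What = Zᵀ * W * (Wᵀ * What) := by
      simp only [Matrix.mul_assoc]
    rw [h3, Matrix.mul_sub, Matrix.sub_mul, h4, h5]
    abel
  have hGτ : ∀ v : Fin K → ℝ,
      Real.sqrt (∑ a, (Gτ *ᵥ v) a ^ 2) ≤ τ * Real.sqrt (∑ j, v j ^ 2) := by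
    intro v
    rw [hGτdef]
    have h1 : (Tᵀ * What) *ᵥ v = Tᵀ *ᵥ (What *ᵥ v) := by
      rw [← Matrix.mulVec_mulVec]
    rw [h1]
    calc Real.sqrt (∑ a, (Tᵀ *ᵥ (What *ᵥ v)) a ^ 2)
        ≤ specNorm Tᵀ * Real.sqrt (∑ a, (What *ᵥ v) a ^ 2) := mulVec_norm_le _ _
      _ = τ * Real.sqrt (∑ j, v j ^ 2) := by
          rw [specNorm_transpose, mulVec_isometry What hWhat, hτ, hT]
  -- X contracts
  have hXcon : ∀ v : Fin K → ℝ, ∑ i, (X *ᵥ v) i ^ 2 ≤ ∑ j, v j ^ 2 := by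
    intro v
    rw [hX]
    have h1 : (Vᵀ * (Wᵀ * What)) *ᵥ v = Vᵀ *ᵥ (Wᵀ *ᵥ (What *ᵥ v)) := by
      simp only [← Matrix.mulVec_mulVec, Matrix.mul_assoc]
    rw [h1]
    have hVt : (Vᵀ)ᵀ * Vᵀ = 1 := by rw [Matrix.transpose_transpose]; exact hVV
    rw [mulVec_isometry Vᵀ hVt]
    calc ∑ i, (Wᵀ *ᵥ (What *ᵥ v)) i ^ 2 ≤ ∑ a, (What *ᵥ v) a ^ 2 :=
          transpose_contraction W hW _
      _ = ∑ j, v j ^ 2 := mulVec_isometry What hWhat v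
  -- key singular value bounds
  have key1 : r + s < p → r + s < K → σh (r + s) ≤ τ := by
    intro h1 h2
    refine sv_key p K (r+s) h1 h2 σh hσhanti hσhnonneg Uh Vh hUh hVh (Zᵀ * What) hSVDh
      (Matrix.of fun (i : Fin p) (j : Fin (r+s)) =>
          σ j.1 * U i ⟨j.1, lt_of_lt_of_le j.2 hrp⟩)
      (Matrix.of fun (j : Fin (r+s)) (l : Fin K) => X ⟨j.1, lt_of_lt_of_le j.2 hrK⟩ l)
      Gτ ?_ τ hτ0 hGτ
    rw [hmain, diagFactor (r+s) hrp hrK σ hσzero U X]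
  have key2 : σh r ≤ σ r + τ := by
    set σb : ℕ → ℝ := fun t => if t < r then σ t else 0 with hσb
    set σt : ℕ → ℝ := fun t => if t < r then 0 else σ t with hσt
    have hrp' : r ≤ p := by omega
    have hrK' : r ≤ K := by omega
    refine sv_key p K r (by omega) (by omega) σh hσhanti hσhnonneg Uh Vh hUh hVh
      (Zᵀ * What) hSVDh
      (Matrix.of fun (i : Fin p) (j : Fin r) =>
          σb j.1 * U i ⟨j.1, lt_of_lt_of_le j.2 hrp'⟩)
      (Matrix.of fun (j : Fin r) (l : Fin K) => X ⟨j.1, lt_of_lt_of_le j.2 hrK'⟩ l)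
      (U * (Matrix.of fun (i : Fin p) (j : Fin K) =>
          if (i:ℕ) = (j:ℕ) then σt (i:ℕ) else 0) * X + Gτ) ?_ (σ r + τ)
      (by positivity) ?_
    · rw [hmain, ← diagFactor r hrp' hrK' σb (fun t ht => by simp [hσb, Nat.not_lt.mpr ht]) U X]
      have hsplit : (Matrix.of fun (i : Fin p) (j : Fin K) =>
            if (i:ℕ) = (j:ℕ) then σ (i:ℕ) else 0)
          = (Matrix.of fun (i : Fin p) (j : Fin K) =>
            if (i:ℕ) = (j:ℕ) then σb (i:ℕ) else 0)
          + (Matrix.of fun (i : Fin p) (j : Fin K) =>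
            if (i:ℕ) = (j:ℕ) then σt (i:ℕ) else 0) := by
        ext i j
        simp only [Matrix.add_apply, Matrix.of_apply, hσb, hσt]
        by_cases h1 : (i:ℕ) = (j:ℕ) <;> by_cases h2 : (j:ℕ) < r <;> simp [h1, h2]
      rw [hsplit, Matrix.mul_add, Matrix.add_mul, add_assoc]
    · intro v
      rw [Matrix.add_mulVec]
      calc Real.sqrt (∑ a, (((U * (Matrix.of fun (i : Fin p) (j : Fin K) =>
            if (i:ℕ) = (j:ℕ) then σt (i:ℕ) else 0) * X) *ᵥ v + Gτ *ᵥ v)) a ^ 2)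
          ≤ Real.sqrt (∑ a, ((U * (Matrix.of fun (i : Fin p) (j : Fin K) =>
            if (i:ℕ) = (j:ℕ) then σt (i:ℕ) else 0) * X) *ᵥ v) a ^ 2)
            + Real.sqrt (∑ a, (Gτ *ᵥ v) a ^ 2) := by
            simpa using sqrt_sum_sq_add_le
              (fun a => ((U * (Matrix.of fun (i : Fin p) (j : Fin K) =>
                if (i:ℕ) = (j:ℕ) then σt (i:ℕ) else 0) * X) *ᵥ v) a)
              (fun a => (Gτ *ᵥ v) a)
        _ ≤ σ r * Real.sqrt (∑ j, v j ^ 2) + τ * Real.sqrt (∑ j, v j ^ 2) := by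
            refine add_le_add ?_ (hGτ v)
            have h1 : (U * (Matrix.of fun (i : Fin p) (j : Fin K) =>
                if (i:ℕ) = (j:ℕ) then σt (i:ℕ) else 0) * X) *ᵥ v
                = U *ᵥ ((Matrix.of fun (i : Fin p) (j : Fin K) =>
                if (i:ℕ) = (j:ℕ) then σt (i:ℕ) else 0) *ᵥ (X *ᵥ v)) := by
              simp only [← Matrix.mulVec_mulVec, Matrix.mul_assoc]
            rw [h1, mulVec_isometry U hU]
            have h2 : ∑ i, ((Matrix.of fun (i : Fin p) (j : Fin K) =>
                if (i:ℕ) = (j:ℕ) then σt (i:ℕ) else 0) *ᵥ (X *ᵥ v)) i ^ 2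
                ≤ σ r ^ 2 * ∑ j, (X *ᵥ v) j ^ 2 := by
              refine rdiag_sq_bound σt (σ r) ?_ (X *ᵥ v)
              intro t
              simp only [hσt]
              by_cases h : t < r
              · simp [h]; positivity
              · rw [if_neg h, abs_of_nonneg (hσnn t)]
                exact hσler t (by omega)
            have h3 : σ r ^ 2 * ∑ j, (X *ᵥ v) j ^ 2 ≤ σ r ^ 2 * ∑ j, v j ^ 2 :=
              mul_le_mul_of_nonneg_left (hXcon v) (by positivity)
            calc Real.sqrt (∑ i, ((Matrix.of fun (i : Fin p) (j : Fin K) =>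
                  if (i:ℕ) = (j:ℕ) then σt (i:ℕ) else 0) *ᵥ (X *ᵥ v)) i ^ 2)
                ≤ Real.sqrt (σ r ^ 2 * ∑ j, v j ^ 2) := Real.sqrt_le_sqrt (le_trans h2 h3)
              _ = σ r * Real.sqrt (∑ j, v j ^ 2) := by
                  rw [Real.sqrt_mul (by positivity), Real.sqrt_sq (le_of_lt hσr0)]
        _ = (σ r + τ) * Real.sqrt (∑ j, v j ^ 2) := by ring
    -- extended sigma functions
  set σe : ℕ → ℝ := fun i => if i < K then σh i else 0 with hσe
  set σf : ℕ → ℝ := fun i => if i < p then σh i else 0 with hσf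
  have hσhr : ∀ i, r ≤ i → σh i < 1 := by
    intro i hi
    have h1 : σh i ≤ σh r := hσhanti r i hi
    nlinarith [key2]
  have hinvh : ∀ i, r ≤ i → 0 < 1 - σh i ^ 2 := by
    intro i hi
    have h1 := hσhr i hi
    have h2 := hσhnonneg i
    nlinarith
  have hinve : ∀ i, r ≤ i → 0 < 1 - σe i ^ 2 := by
    intro i hi
    simp only [hσe]
    by_cases h : i < K
    · simpa [h] using hinvh i hi
    · simp [h]
  have hinvf : ∀ i, r ≤ i → 0 < 1 - σf i ^ 2 := by
    intro i hi
    simp only [hσf]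
    by_cases h : i < p
    · simpa [h] using hinvh i hi
    · simp [h]
  -- column functions
  set zc : ℕ → Fin n → ℝ := fun i a => if h : i < p then Zh a ⟨i, h⟩ else 0 with hzc
  set wc : ℕ → Fin n → ℝ := fun i a => if h : i < K then Wbr a ⟨i, h⟩ else 0 with hwc
  -- entries of Mhᵀ * Mh
  have hMM_ll : ∀ (j l : Fin (p-r)), (Mhᵀ * Mh) (Sum.inl j) (Sum.inl l)
      = if j = l then (1:ℝ) else 0 := by
    intro j l
    rw [Matrix.mul_apply]
    have h1 : ∀ a : Fin n, Mhᵀ (Sum.inl j) a * Mh a (Sum.inl l)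
        = Zh a ⟨r + j.1, by have := j.2; omega⟩ * Zh a ⟨r + l.1, by have := l.2; omega⟩ := by
      intro a
      rw [Matrix.transpose_apply, hMhl, hMhl]
    rw [Finset.sum_congr rfl fun a _ => h1 a]
    have h2 : ∑ a : Fin n, Zh a ⟨r + j.1, by have := j.2; omega⟩
        * Zh a ⟨r + l.1, by have := l.2; omega⟩
        = (Zhᵀ * Zh) ⟨r + j.1, by have := j.2; omega⟩ ⟨r + l.1, by have := l.2; omega⟩ := by
      rw [Matrix.mul_apply]
      exact Finset.sum_congr rfl fun a _ => by rw [Matrix.transpose_apply]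
    rw [h2, hZZ, Matrix.one_apply]
    by_cases h : j = l
    · subst h; simp
    · rw [if_neg, if_neg h]
      intro he
      apply h
      have := Fin.mk.injEq (r + j.1) _ (r + l.1) _ ▸ he
      apply Fin.ext
      have h3 : r + j.1 = r + l.1 := by
        have := congrArg Fin.val he
        simpa using this
      omega
  have hMM_rr : ∀ (j l : Fin (K-r)), (Mhᵀ * Mh) (Sum.inr j) (Sum.inr l)
      = if j = l then (1:ℝ) else 0 := by
    intro j l
    rw [Matrix.mul_apply]
    have h1 : ∀ a : Fin n, Mhᵀ (Sum.inr j) a * Mh a (Sum.inr l)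
        = Wbr a ⟨r + j.1, by have := j.2; omega⟩ * Wbr a ⟨r + l.1, by have := l.2; omega⟩ := by
      intro a
      rw [Matrix.transpose_apply, hMhr, hMhr]
    rw [Finset.sum_congr rfl fun a _ => h1 a]
    have h2 : ∑ a : Fin n, Wbr a ⟨r + j.1, by have := j.2; omega⟩
        * Wbr a ⟨r + l.1, by have := l.2; omega⟩
        = (Wbrᵀ * Wbr) ⟨r + j.1, by have := j.2; omega⟩ ⟨r + l.1, by have := l.2; omega⟩ := by
      rw [Matrix.mul_apply]
      exact Finset.sum_congr rfl fun a _ => by rw [Matrix.transpose_apply]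
    rw [h2, hWW, Matrix.one_apply]
    by_cases h : j = l
    · subst h; simp
    · rw [if_neg, if_neg h]
      intro he
      apply h
      apply Fin.ext
      have h3 : r + j.1 = r + l.1 := by
        have := congrArg Fin.val he
        simpa using this
      omega
  have hMM_lr : ∀ (j : Fin (p-r)) (l : Fin (K-r)), (Mhᵀ * Mh) (Sum.inl j) (Sum.inr l)
      = if j.1 = l.1 then σh (r + j.1) else 0 := by
    intro j l
    rw [Matrix.mul_apply]
    have h1 : ∀ a : Fin n, Mhᵀ (Sum.inl j) a * Mh a (Sum.inr l)
        = Zh a ⟨r + j.1, by have := j.2; omega⟩ * Wbr a ⟨r + l.1, by have := l.2; omega⟩ := by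
      intro a
      rw [Matrix.transpose_apply, hMhl, hMhr]
    rw [Finset.sum_congr rfl fun a _ => h1 a]
    have h2 : ∑ a : Fin n, Zh a ⟨r + j.1, by have := j.2; omega⟩
        * Wbr a ⟨r + l.1, by have := l.2; omega⟩
        = (Zhᵀ * Wbr) ⟨r + j.1, by have := j.2; omega⟩ ⟨r + l.1, by have := l.2; omega⟩ := by
      rw [Matrix.mul_apply]
      exact Finset.sum_congr rfl fun a _ => by rw [Matrix.transpose_apply]
    rw [h2, hZW]
    simp only [Matrix.of_apply]
    by_cases h : j.1 = l.1
    · rw [if_pos (by simpa using congrArg (r + ·) h), if_pos h]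
    · rw [if_neg (by simp; omega), if_neg h]
  have hMM_rl : ∀ (j : Fin (K-r)) (l : Fin (p-r)), (Mhᵀ * Mh) (Sum.inr j) (Sum.inl l)
      = if j.1 = l.1 then σh (r + j.1) else 0 := by
    intro j l
    rw [Matrix.mul_apply]
    have h1 : ∀ a : Fin n, Mhᵀ (Sum.inr j) a * Mh a (Sum.inl l)
        = Zh a ⟨r + l.1, by have := l.2; omega⟩ * Wbr a ⟨r + j.1, by have := j.2; omega⟩ := by
      intro a
      rw [Matrix.transpose_apply, hMhr, hMhl]
      ring
    rw [Finset.sum_congr rfl fun a _ => h1 a]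
    have h2 : ∑ a : Fin n, Zh a ⟨r + l.1, by have := l.2; omega⟩
        * Wbr a ⟨r + j.1, by have := j.2; omega⟩
        = (Zhᵀ * Wbr) ⟨r + l.1, by have := l.2; omega⟩ ⟨r + j.1, by have := j.2; omega⟩ := by
      rw [Matrix.mul_apply]
      exact Finset.sum_congr rfl fun a _ => by rw [Matrix.transpose_apply]
    rw [h2, hZW]
    simp only [Matrix.of_apply]
    by_cases h : j.1 = l.1
    · rw [if_pos (by simp; omega), if_pos h]
      rw [show r + l.1 = r + j.1 by omega]
    · rw [if_neg (by simp; omega), if_neg h]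
    -- explicit inverse
  set NN : Matrix (Fin (p-r) ⊕ Fin (K-r)) (Fin (p-r) ⊕ Fin (K-r)) ℝ :=
    Matrix.of (fun x y =>
      Sum.elim
        (fun j => Sum.elim
          (fun l => if j.1 = l.1 then (1 - σe (r + j.1) ^ 2)⁻¹ else 0)
          (fun l => if j.1 = l.1 then -(σh (r + j.1) * (1 - σh (r + j.1) ^ 2)⁻¹) else 0) y)
        (fun j => Sum.elim
          (fun l => if j.1 = l.1 then -(σh (r + j.1) * (1 - σh (r + j.1) ^ 2)⁻¹) else 0)
          (fun l => if j.1 = l.1 then (1 - σf (r + j.1) ^ 2)⁻¹ else 0) y) x) with hNN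
  have hNN_ll : ∀ (j l : Fin (p-r)), NN (Sum.inl j) (Sum.inl l)
      = if j.1 = l.1 then (1 - σe (r + j.1) ^ 2)⁻¹ else 0 := fun j l => rfl
  have hNN_lr : ∀ (j : Fin (p-r)) (l : Fin (K-r)), NN (Sum.inl j) (Sum.inr l)
      = if j.1 = l.1 then -(σh (r + j.1) * (1 - σh (r + j.1) ^ 2)⁻¹) else 0 := fun j l => rfl
  have hNN_rl : ∀ (j : Fin (K-r)) (l : Fin (p-r)), NN (Sum.inr j) (Sum.inl l)
      = if j.1 = l.1 then -(σh (r + j.1) * (1 - σh (r + j.1) ^ 2)⁻¹) else 0 := fun j l => rfl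
  have hNN_rr : ∀ (j l : Fin (K-r)), NN (Sum.inr j) (Sum.inr l)
      = if j.1 = l.1 then (1 - σf (r + j.1) ^ 2)⁻¹ else 0 := fun j l => rfl
  have hσe_eq : ∀ i, i < K → σe i = σh i := by
    intro i hi; simp only [hσe]; rw [if_pos hi]
  have hσe_zero : ∀ i, ¬ (i < K) → σe i = 0 := by
    intro i hi; simp only [hσe]; rw [if_neg hi]
  have hσf_eq : ∀ i, i < p → σf i = σh i := by
    intro i hi; simp only [hσf]; rw [if_pos hi]
  have hσf_zero : ∀ i, ¬ (i < p) → σf i = 0 := by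
    intro i hi; simp only [hσf]; rw [if_neg hi]
  -- entries of identity on the sum type
  have hone_ll : ∀ (j l : Fin (p-r)),
      (1 : Matrix (Fin (p-r) ⊕ Fin (K-r)) (Fin (p-r) ⊕ Fin (K-r)) ℝ) (Sum.inl j) (Sum.inl l)
      = if j.1 = l.1 then 1 else 0 := by
    intro j l
    rw [Matrix.one_apply]
    by_cases h : j = l
    · subst h; simp
    · rw [if_neg (fun hh => h (Sum.inl.inj hh)), if_neg (fun hh => h (Fin.ext hh))]
  have hone_rr : ∀ (j l : Fin (K-r)),
      (1 : Matrix (Fin (p-r) ⊕ Fin (K-r)) (Fin (p-r) ⊕ Fin (K-r)) ℝ) (Sum.inr j) (Sum.inr l)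
      = if j.1 = l.1 then 1 else 0 := by
    intro j l
    rw [Matrix.one_apply]
    by_cases h : j = l
    · subst h; simp
    · rw [if_neg (fun hh => h (Sum.inr.inj hh)), if_neg (fun hh => h (Fin.ext hh))]
  have hone_lr : ∀ (j : Fin (p-r)) (l : Fin (K-r)),
      (1 : Matrix (Fin (p-r) ⊕ Fin (K-r)) (Fin (p-r) ⊕ Fin (K-r)) ℝ) (Sum.inl j) (Sum.inr l)
      = 0 := by
    intro j l
    rw [Matrix.one_apply, if_neg (fun hh => Sum.inl_ne_inr hh)]
  have hone_rl : ∀ (j : Fin (K-r)) (l : Fin (p-r)),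
      (1 : Matrix (Fin (p-r) ⊕ Fin (K-r)) (Fin (p-r) ⊕ Fin (K-r)) ℝ) (Sum.inr j) (Sum.inl l)
      = 0 := by
    intro j l
    rw [Matrix.one_apply, if_neg (fun hh => Sum.inr_ne_inl hh)]
  have hRight : (Mhᵀ * Mh) * NN = 1 := by
    ext x y
    rw [Matrix.mul_apply, Fintype.sum_sum_type]
    cases x with
    | inl j =>
      cases y with
      | inl l =>
        have hs1 : ∑ m : Fin (p-r), (Mhᵀ * Mh) (Sum.inl j) (Sum.inl m) * NN (Sum.inl m) (Sum.inl l)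
            = if j.1 = l.1 then (1 - σe (r + l.1) ^ 2)⁻¹ else 0 := by
          have he : ∀ m : Fin (p-r), (Mhᵀ * Mh) (Sum.inl j) (Sum.inl m) * NN (Sum.inl m) (Sum.inl l)
              = if j.1 = m.1 then
                  (if j.1 = l.1 then (1 - σe (r + l.1) ^ 2)⁻¹ else 0) else 0 := by
            intro m
            rw [hMM_ll j m, hNN_ll m l]
            by_cases h1 : j.1 = m.1
            · conv_rhs => rw [if_pos h1]
              rw [if_pos (Fin.ext h1 : j = m), one_mul]
              by_cases h2 : m.1 = l.1
              · conv_rhs => rw [if_pos (show j.1 = l.1 by omega)]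
                rw [if_pos h2, show r + m.1 = r + l.1 by omega]
              · conv_rhs => rw [if_neg (show ¬ j.1 = l.1 by omega)]
                rw [if_neg h2]
            · conv_rhs => rw [if_neg h1]
              rw [if_neg (fun hh => h1 (by rw [hh]) : ¬ j = m), zero_mul]
          rw [Finset.sum_congr rfl fun m _ => he m, fin_sum_delta (p - r) j.1 _,
            dif_pos (j.2 : j.1 < p - r)]
        have hs2 : ∑ m : Fin (K-r), (Mhᵀ * Mh) (Sum.inl j) (Sum.inr m) * NN (Sum.inr m) (Sum.inl l)
            = if _h : j.1 < K - r then
                (if j.1 = l.1 then -(σh (r + j.1) ^ 2 * (1 - σh (r + j.1) ^ 2)⁻¹) else 0)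
              else 0 := by
          have he : ∀ m : Fin (K-r), (Mhᵀ * Mh) (Sum.inl j) (Sum.inr m) * NN (Sum.inr m) (Sum.inl l)
              = if j.1 = m.1 then
                  (if j.1 = l.1 then -(σh (r + j.1) ^ 2 * (1 - σh (r + j.1) ^ 2)⁻¹) else 0)
                else 0 := by
            intro m
            rw [hMM_lr j m, hNN_rl m l]
            by_cases h1 : j.1 = m.1
            · conv_rhs => rw [if_pos h1]
              rw [if_pos h1, show r + m.1 = r + j.1 by omega]
              by_cases h2 : m.1 = l.1
              · conv_rhs => rw [if_pos (show j.1 = l.1 by omega)]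
                rw [if_pos h2]; ring
              · conv_rhs => rw [if_neg (show ¬ j.1 = l.1 by omega)]
                rw [if_neg h2, mul_zero]
            · conv_rhs => rw [if_neg h1]
              rw [if_neg h1, zero_mul]
          rw [Finset.sum_congr rfl fun m _ => he m]
          exact fin_sum_delta (K - r) j.1 _
        rw [hs1, hs2, hone_ll j l]
        by_cases h : j.1 = l.1
        · rw [if_pos h, if_pos h, if_pos h]
          by_cases hK : j.1 < K - r
          · rw [dif_pos hK, hσe_eq _ (by omega), show r + l.1 = r + j.1 by omega]
            have hne : (1 - σh (r + j.1) ^ 2) ≠ 0 := ne_of_gt (hinvh (r + j.1) (by omega))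
            field_simp
            ring
          · rw [dif_neg hK, hσe_zero _ (by omega)]
            norm_num
        · rw [if_neg h, if_neg h, if_neg h]
          by_cases hK : j.1 < K - r
          · rw [dif_pos hK]; norm_num
          · rw [dif_neg hK]; norm_num
      | inr l =>
        have hs1 : ∑ m : Fin (p-r), (Mhᵀ * Mh) (Sum.inl j) (Sum.inl m) * NN (Sum.inl m) (Sum.inr l)
            = if j.1 = l.1 then -(σh (r + j.1) * (1 - σh (r + j.1) ^ 2)⁻¹) else 0 := by
          have he : ∀ m : Fin (p-r), (Mhᵀ * Mh) (Sum.inl j) (Sum.inl m) * NN (Sum.inl m) (Sum.inr l)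
              = if j.1 = m.1 then
                  (if j.1 = l.1 then -(σh (r + j.1) * (1 - σh (r + j.1) ^ 2)⁻¹) else 0) else 0 := by
            intro m
            rw [hMM_ll j m, hNN_lr m l]
            by_cases h1 : j.1 = m.1
            · conv_rhs => rw [if_pos h1]
              rw [if_pos (Fin.ext h1 : j = m), one_mul, show r + m.1 = r + j.1 by omega]
              by_cases h2 : m.1 = l.1
              · conv_rhs => rw [if_pos (show j.1 = l.1 by omega)]
                rw [if_pos h2]
              · conv_rhs => rw [if_neg (show ¬ j.1 = l.1 by omega)]
                rw [if_neg h2]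
            · conv_rhs => rw [if_neg h1]
              rw [if_neg (fun hh => h1 (by rw [hh]) : ¬ j = m), zero_mul]
          rw [Finset.sum_congr rfl fun m _ => he m, fin_sum_delta (p - r) j.1 _,
            dif_pos (j.2 : j.1 < p - r)]
        have hs2 : ∑ m : Fin (K-r), (Mhᵀ * Mh) (Sum.inl j) (Sum.inr m) * NN (Sum.inr m) (Sum.inr l)
            = if _h : j.1 < K - r then
                (if j.1 = l.1 then σh (r + j.1) * (1 - σf (r + j.1) ^ 2)⁻¹ else 0)
              else 0 := by
          have he : ∀ m : Fin (K-r), (Mhᵀ * Mh) (Sum.inl j) (Sum.inr m) * NN (Sum.inr m) (Sum.inr l)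
              = if j.1 = m.1 then
                  (if j.1 = l.1 then σh (r + j.1) * (1 - σf (r + j.1) ^ 2)⁻¹ else 0)
                else 0 := by
            intro m
            rw [hMM_lr j m, hNN_rr m l]
            by_cases h1 : j.1 = m.1
            · conv_rhs => rw [if_pos h1]
              rw [if_pos h1, show r + m.1 = r + j.1 by omega]
              by_cases h2 : m.1 = l.1
              · conv_rhs => rw [if_pos (show j.1 = l.1 by omega)]
                rw [if_pos h2]
              · conv_rhs => rw [if_neg (show ¬ j.1 = l.1 by omega)]
                rw [if_neg h2, mul_zero]
            · conv_rhs => rw [if_neg h1]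
              rw [if_neg h1, zero_mul]
          rw [Finset.sum_congr rfl fun m _ => he m]
          exact fin_sum_delta (K - r) j.1 _
        rw [hs1, hs2, hone_lr j l]
        by_cases h : j.1 = l.1
        · have hK : j.1 < K - r := by have := l.2; omega
          rw [if_pos h, dif_pos hK, if_pos h, hσf_eq _ (by have := j.2; omega)]
          ring
        · simp only [if_neg h]
          by_cases hK : j.1 < K - r
          · rw [dif_pos hK]; norm_num
          · rw [dif_neg hK]; norm_num
    | inr j =>
      cases y with
      | inl l =>
        have hs1 : ∑ m : Fin (p-r), (Mhᵀ * Mh) (Sum.inr j) (Sum.inl m) * NN (Sum.inl m) (Sum.inl l)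
            = if _h : j.1 < p - r then
                (if j.1 = l.1 then σh (r + j.1) * (1 - σe (r + j.1) ^ 2)⁻¹ else 0)
              else 0 := by
          have he : ∀ m : Fin (p-r), (Mhᵀ * Mh) (Sum.inr j) (Sum.inl m) * NN (Sum.inl m) (Sum.inl l)
              = if j.1 = m.1 then
                  (if j.1 = l.1 then σh (r + j.1) * (1 - σe (r + j.1) ^ 2)⁻¹ else 0)
                else 0 := by
            intro m
            rw [hMM_rl j m, hNN_ll m l]
            by_cases h1 : j.1 = m.1
            · conv_rhs => rw [if_pos h1]
              rw [if_pos h1, show r + m.1 = r + j.1 by omega]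
              by_cases h2 : m.1 = l.1
              · conv_rhs => rw [if_pos (show j.1 = l.1 by omega)]
                rw [if_pos h2]
              · conv_rhs => rw [if_neg (show ¬ j.1 = l.1 by omega)]
                rw [if_neg h2, mul_zero]
            · conv_rhs => rw [if_neg h1]
              rw [if_neg h1, zero_mul]
          rw [Finset.sum_congr rfl fun m _ => he m]
          exact fin_sum_delta (p - r) j.1 _
        have hs2 : ∑ m : Fin (K-r), (Mhᵀ * Mh) (Sum.inr j) (Sum.inr m) * NN (Sum.inr m) (Sum.inl l)
            = if j.1 = l.1 then -(σh (r + j.1) * (1 - σh (r + j.1) ^ 2)⁻¹) else 0 := by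
          have he : ∀ m : Fin (K-r), (Mhᵀ * Mh) (Sum.inr j) (Sum.inr m) * NN (Sum.inr m) (Sum.inl l)
              = if j.1 = m.1 then
                  (if j.1 = l.1 then -(σh (r + j.1) * (1 - σh (r + j.1) ^ 2)⁻¹) else 0) else 0 := by
            intro m
            rw [hMM_rr j m, hNN_rl m l]
            by_cases h1 : j.1 = m.1
            · conv_rhs => rw [if_pos h1]
              rw [if_pos (Fin.ext h1 : j = m), one_mul, show r + m.1 = r + j.1 by omega]
              by_cases h2 : m.1 = l.1
              · conv_rhs => rw [if_pos (show j.1 = l.1 by omega)]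
                rw [if_pos h2]
              · conv_rhs => rw [if_neg (show ¬ j.1 = l.1 by omega)]
                rw [if_neg h2]
            · conv_rhs => rw [if_neg h1]
              rw [if_neg (fun hh => h1 (by rw [hh]) : ¬ j = m), zero_mul]
          rw [Finset.sum_congr rfl fun m _ => he m, fin_sum_delta (K - r) j.1 _,
            dif_pos (j.2 : j.1 < K - r)]
        rw [hs1, hs2, hone_rl j l]
        by_cases h : j.1 = l.1
        · have hK : j.1 < p - r := by have := l.2; omega
          rw [if_pos h, dif_pos hK, if_pos h, hσe_eq _ (by have := j.2; omega)]
          ring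
        · simp only [if_neg h]
          by_cases hK : j.1 < p - r
          · rw [dif_pos hK]; norm_num
          · rw [dif_neg hK]; norm_num
      | inr l =>
        have hs1 : ∑ m : Fin (p-r), (Mhᵀ * Mh) (Sum.inr j) (Sum.inl m) * NN (Sum.inl m) (Sum.inr l)
            = if _h : j.1 < p - r then
                (if j.1 = l.1 then -(σh (r + j.1) ^ 2 * (1 - σh (r + j.1) ^ 2)⁻¹) else 0)
              else 0 := by
          have he : ∀ m : Fin (p-r), (Mhᵀ * Mh) (Sum.inr j) (Sum.inl m) * NN (Sum.inl m) (Sum.inr l)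
              = if j.1 = m.1 then
                  (if j.1 = l.1 then -(σh (r + j.1) ^ 2 * (1 - σh (r + j.1) ^ 2)⁻¹) else 0)
                else 0 := by
            intro m
            rw [hMM_rl j m, hNN_lr m l]
            by_cases h1 : j.1 = m.1
            · conv_rhs => rw [if_pos h1]
              rw [if_pos h1, show r + m.1 = r + j.1 by omega]
              by_cases h2 : m.1 = l.1
              · conv_rhs => rw [if_pos (show j.1 = l.1 by omega)]
                rw [if_pos h2]; ring
              · conv_rhs => rw [if_neg (show ¬ j.1 = l.1 by omega)]
                rw [if_neg h2, mul_zero]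
            · conv_rhs => rw [if_neg h1]
              rw [if_neg h1, zero_mul]
          rw [Finset.sum_congr rfl fun m _ => he m]
          exact fin_sum_delta (p - r) j.1 _
        have hs2 : ∑ m : Fin (K-r), (Mhᵀ * Mh) (Sum.inr j) (Sum.inr m) * NN (Sum.inr m) (Sum.inr l)
            = if j.1 = l.1 then (1 - σf (r + l.1) ^ 2)⁻¹ else 0 := by
          have he : ∀ m : Fin (K-r), (Mhᵀ * Mh) (Sum.inr j) (Sum.inr m) * NN (Sum.inr m) (Sum.inr l)
              = if j.1 = m.1 then
                  (if j.1 = l.1 then (1 - σf (r + l.1) ^ 2)⁻¹ else 0) else 0 := by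
            intro m
            rw [hMM_rr j m, hNN_rr m l]
            by_cases h1 : j.1 = m.1
            · conv_rhs => rw [if_pos h1]
              rw [if_pos (Fin.ext h1 : j = m), one_mul]
              by_cases h2 : m.1 = l.1
              · conv_rhs => rw [if_pos (show j.1 = l.1 by omega)]
                rw [if_pos h2, show r + m.1 = r + l.1 by omega]
              · conv_rhs => rw [if_neg (show ¬ j.1 = l.1 by omega)]
                rw [if_neg h2]
            · conv_rhs => rw [if_neg h1]
              rw [if_neg (fun hh => h1 (by rw [hh]) : ¬ j = m), zero_mul]
          rw [Finset.sum_congr rfl fun m _ => he m, fin_sum_delta (K - r) j.1 _,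
            dif_pos (j.2 : j.1 < K - r)]
        rw [hs1, hs2, hone_rr j l]
        by_cases h : j.1 = l.1
        · rw [if_pos h, if_pos h, if_pos h]
          by_cases hK : j.1 < p - r
          · rw [dif_pos hK, hσf_eq _ (by omega), show r + l.1 = r + j.1 by omega]
            have hne : (1 - σh (r + j.1) ^ 2) ≠ 0 := ne_of_gt (hinvh (r + j.1) (by omega))
            field_simp
            ring
          · rw [dif_neg hK, hσf_zero _ (by omega)]
            norm_num
        · rw [if_neg h, if_neg h, if_neg h]
          by_cases hK : j.1 < p - r
          · rw [dif_pos hK]; norm_num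
          · rw [dif_neg hK]; norm_num
  have hNinv : (Mhᵀ * Mh)⁻¹ = NN := Matrix.inv_eq_right_inv hRight
    -- column access lemmas
  have hzcl : ∀ (i : ℕ) (a : Fin n) (h : i < p), zc i a = Zh a ⟨i, h⟩ := by
    intro i a h; simp only [hzc]; rw [dif_pos h]
  have hzc0 : ∀ (i : ℕ) (a : Fin n), ¬ (i < p) → zc i a = 0 := by
    intro i a h; simp only [hzc]; rw [dif_neg h]
  have hwcl : ∀ (i : ℕ) (a : Fin n) (h : i < K), wc i a = Wbr a ⟨i, h⟩ := by
    intro i a h; simp only [hwc]; rw [dif_pos h]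
  have hwc0 : ∀ (i : ℕ) (a : Fin n), ¬ (i < K) → wc i a = 0 := by
    intro i a h; simp only [hwc]; rw [dif_neg h]
  have hMhTl : ∀ (b : Fin n) (m : Fin (p-r)), Mhᵀ (Sum.inl m) b = zc (r + m.1) b := by
    intro b m
    rw [Matrix.transpose_apply, hMhl, hzcl (r + m.1) b (by have := m.2; omega)]
  have hMhTr : ∀ (b : Fin n) (m : Fin (K-r)), Mhᵀ (Sum.inr m) b = wc (r + m.1) b := by
    intro b m
    rw [Matrix.transpose_apply, hMhr, hwcl (r + m.1) b (by have := m.2; omega)]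
  -- rows of NN * Mhᵀ
  have hNMl : ∀ (j : Fin (p-r)) (b : Fin n), (NN * Mhᵀ) (Sum.inl j) b
      = (1 - σe (r + j.1) ^ 2)⁻¹ * zc (r + j.1) b
        - σe (r + j.1) * (1 - σe (r + j.1) ^ 2)⁻¹ * wc (r + j.1) b := by
    intro j b
    rw [Matrix.mul_apply, Fintype.sum_sum_type]
    have hs1 : ∑ m : Fin (p-r), NN (Sum.inl j) (Sum.inl m) * Mhᵀ (Sum.inl m) b
        = (1 - σe (r + j.1) ^ 2)⁻¹ * zc (r + j.1) b := by
      rw [Finset.sum_congr rfl fun m _ => by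
        rw [hNN_ll j m, hMhTl b m, ite_mul, zero_mul]]
      rw [fin_sum_delta (p-r) j.1 _, dif_pos (j.2 : j.1 < p - r)]
    have hs2 : ∑ m : Fin (K-r), NN (Sum.inl j) (Sum.inr m) * Mhᵀ (Sum.inr m) b
        = -(σe (r + j.1) * (1 - σe (r + j.1) ^ 2)⁻¹ * wc (r + j.1) b) := by
      rw [Finset.sum_congr rfl fun m _ => by
        rw [hNN_lr j m, hMhTr b m, ite_mul, zero_mul]]
      rw [fin_sum_delta (K-r) j.1 _]
      by_cases hK : j.1 < K - r
      · rw [dif_pos hK, hσe_eq _ (by omega)]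
        ring
      · rw [dif_neg hK, hσe_zero _ (by omega), hwc0 (r + j.1) b (by omega)]
        ring
    rw [hs1, hs2]
    ring
  have hNMr : ∀ (j : Fin (K-r)) (b : Fin n), (NN * Mhᵀ) (Sum.inr j) b
      = (1 - σf (r + j.1) ^ 2)⁻¹ * wc (r + j.1) b
        - σf (r + j.1) * (1 - σf (r + j.1) ^ 2)⁻¹ * zc (r + j.1) b := by
    intro j b
    rw [Matrix.mul_apply, Fintype.sum_sum_type]
    have hs1 : ∑ m : Fin (p-r), NN (Sum.inr j) (Sum.inl m) * Mhᵀ (Sum.inl m) b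
        = -(σf (r + j.1) * (1 - σf (r + j.1) ^ 2)⁻¹ * zc (r + j.1) b) := by
      rw [Finset.sum_congr rfl fun m _ => by
        rw [hNN_rl j m, hMhTl b m, ite_mul, zero_mul]]
      rw [fin_sum_delta (p-r) j.1 _]
      by_cases hK : j.1 < p - r
      · rw [dif_pos hK, hσf_eq _ (by omega)]
        ring
      · rw [dif_neg hK, hσf_zero _ (by omega), hzc0 (r + j.1) b (by omega)]
        ring
    have hs2 : ∑ m : Fin (K-r), NN (Sum.inr j) (Sum.inr m) * Mhᵀ (Sum.inr m) b
        = (1 - σf (r + j.1) ^ 2)⁻¹ * wc (r + j.1) b := by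
      rw [Finset.sum_congr rfl fun m _ => by
        rw [hNN_rr j m, hMhTr b m, ite_mul, zero_mul]]
      rw [fin_sum_delta (K-r) j.1 _, dif_pos (j.2 : j.1 < K - r)]
    rw [hs1, hs2]
    ring
  -- entrywise formula for PCh
  have hPChE : ∀ (a b : Fin n), PCh a b
      = ∑ i ∈ Finset.Ico r p, ((1 - σe i ^ 2)⁻¹ * (zc i a * zc i b)
          - σe i * (1 - σe i ^ 2)⁻¹ * (zc i a * wc i b)) := by
    intro a b
    rw [hPCh, hNinv, Matrix.mul_assoc, Matrix.mul_apply, Fintype.sum_sum_type]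
    have hs2 : ∑ m : Fin (K-r), (Matrix.of fun (a : Fin n) (j : Fin (p - r) ⊕ Fin (K - r)) =>
        Sum.elim (fun j' : Fin (p - r) => Zh a ⟨r + j'.1, by have := j'.2; omega⟩)
                 (fun _ : Fin (K - r) => (0 : ℝ)) j) a (Sum.inr m) * (NN * Mhᵀ) (Sum.inr m) b
        = 0 := by
      refine Finset.sum_eq_zero fun m _ => ?_
      simp only [Matrix.of_apply, Sum.elim_inr, zero_mul]
    have hs1 : ∑ m : Fin (p-r), (Matrix.of fun (a : Fin n) (j : Fin (p - r) ⊕ Fin (K - r)) =>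
        Sum.elim (fun j' : Fin (p - r) => Zh a ⟨r + j'.1, by have := j'.2; omega⟩)
                 (fun _ : Fin (K - r) => (0 : ℝ)) j) a (Sum.inl m) * (NN * Mhᵀ) (Sum.inl m) b
        = ∑ t ∈ Finset.range (p - r), ((1 - σe (r + t) ^ 2)⁻¹ * (zc (r + t) a * zc (r + t) b)
          - σe (r + t) * (1 - σe (r + t) ^ 2)⁻¹ * (zc (r + t) a * wc (r + t) b)) := by
      rw [← Fin.sum_univ_eq_sum_range (fun t => ((1 - σe (r + t) ^ 2)⁻¹ * (zc (r + t) a * zc (r + t) b)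
          - σe (r + t) * (1 - σe (r + t) ^ 2)⁻¹ * (zc (r + t) a * wc (r + t) b))) (p - r)]
      refine Finset.sum_congr rfl fun m _ => ?_
      rw [hNMl m b]
      simp only [Matrix.of_apply, Sum.elim_inl]
      rw [← hzcl (r + m.1) a (by have := m.2; omega)]
      ring
    rw [hs1, hs2, add_zero, Finset.sum_Ico_eq_sum_range]
  -- entrywise formula for PCt
  have hPCtE : ∀ (a b : Fin n), PCt a b
      = (∑ i ∈ Finset.Ico r (r+s), (1 - σh i ^ 2)⁻¹ * (zc i a * zc i b))
        - (∑ i ∈ Finset.Ico r (r+s), (σh i / (1 - σh i ^ 2)) * (zc i a * wc i b))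
        + (∑ i ∈ Finset.Ico (r+s) p, zc i a * zc i b) := by
    intro a b
    rw [hPCt]
    rw [Matrix.add_apply, Matrix.sub_apply, Matrix.sum_apply, Matrix.sum_apply, Matrix.sum_apply]
    rw [← Finset.sum_attach (Finset.Ico r (r+s))
        (fun t => (1 - σh t ^ 2)⁻¹ * (zc t a * zc t b)),
      ← Finset.sum_attach (Finset.Ico r (r+s))
        (fun t => (σh t / (1 - σh t ^ 2)) * (zc t a * wc t b)),
      ← Finset.sum_attach (Finset.Ico (r+s) p) (fun t => zc t a * zc t b)]
    congr 1
    · congr 1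
      · refine Finset.sum_congr rfl fun i _ => ?_
        have hi := (Finset.mem_Ico.mp i.2).2
        rw [Matrix.smul_apply, Matrix.vecMulVec_apply, smul_eq_mul,
          hzcl i.1 a (by omega), hzcl i.1 b (by omega)]
      · refine Finset.sum_congr rfl fun i _ => ?_
        have hi := (Finset.mem_Ico.mp i.2).2
        rw [Matrix.smul_apply, Matrix.vecMulVec_apply, smul_eq_mul,
          hzcl i.1 a (by omega), hwcl i.1 b (by omega)]
    · refine Finset.sum_congr rfl fun i _ => ?_
      have hi := (Finset.mem_Ico.mp i.2).2
      rw [Matrix.vecMulVec_apply, hzcl i.1 a (by omega), hzcl i.1 b (by omega)]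
  -- the error matrix
  set gC : ℕ → ℝ := fun i => (1 - σe i ^ 2)⁻¹ - 1 with hgC
  set dC : ℕ → ℝ := fun i => σe i * (1 - σe i ^ 2)⁻¹ with hdC
  have hEC : PCh - PCt = Matrix.of (fun a b : Fin n =>
      ∑ i ∈ Finset.Ico (r+s) p, (gC i * (zc i a * zc i b) - dC i * (zc i a * wc i b))) := by
    ext a b
    rw [Matrix.sub_apply, hPChE a b, hPCtE a b, Matrix.of_apply]
    rw [← Finset.sum_Ico_consecutive
      (fun i => ((1 - σe i ^ 2)⁻¹ * (zc i a * zc i b)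
          - σe i * (1 - σe i ^ 2)⁻¹ * (zc i a * wc i b)))
      (show r ≤ r + s by omega) hrp]
    have hhead : ∑ i ∈ Finset.Ico r (r+s), ((1 - σe i ^ 2)⁻¹ * (zc i a * zc i b)
          - σe i * (1 - σe i ^ 2)⁻¹ * (zc i a * wc i b))
        = (∑ i ∈ Finset.Ico r (r+s), (1 - σh i ^ 2)⁻¹ * (zc i a * zc i b))
          - (∑ i ∈ Finset.Ico r (r+s), (σh i / (1 - σh i ^ 2)) * (zc i a * wc i b)) := by
      rw [← Finset.sum_sub_distrib]
      refine Finset.sum_congr rfl fun i hi => ?_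
      have hiK : i < K := by have := (Finset.mem_Ico.mp hi).2; omega
      rw [hσe_eq _ hiK, div_eq_mul_inv]
    have htail : ∑ i ∈ Finset.Ico (r+s) p, ((1 - σe i ^ 2)⁻¹ * (zc i a * zc i b)
          - σe i * (1 - σe i ^ 2)⁻¹ * (zc i a * wc i b))
          - ∑ i ∈ Finset.Ico (r+s) p, zc i a * zc i b
        = ∑ i ∈ Finset.Ico (r+s) p, (gC i * (zc i a * zc i b) - dC i * (zc i a * wc i b)) := by
      rw [← Finset.sum_sub_distrib]
      refine Finset.sum_congr rfl fun i hi => ?_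
      simp only [hgC, hdC]
      ring
    linarith [hhead, htail]
  -- bound for the PC part
  have hPCbound : specNorm (PCh - PCt) ≤ 16 * τ / (1 - σ r) ^ 2 := by
    rw [hEC]
    have hcore := core_bound n (Finset.Ico (r+s) p) zc wc gC dC (2*τ) (2*τ)
      (by positivity) (by positivity)
      (by
        intro i hi j hj
        obtain ⟨hi1, hi2⟩ := Finset.mem_Ico.mp hi
        obtain ⟨hj1, hj2⟩ := Finset.mem_Ico.mp hj
        have h1 : ∀ a, zc i a * zc j a = Zh a ⟨i, hi2⟩ * Zh a ⟨j, hj2⟩ := fun a => by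
          rw [hzcl i a hi2, hzcl j a hj2]
        rw [Finset.sum_congr rfl fun a _ => h1 a]
        have h2 : ∑ a, Zh a ⟨i, hi2⟩ * Zh a ⟨j, hj2⟩ = (Zhᵀ * Zh) ⟨i, hi2⟩ ⟨j, hj2⟩ := by
          rw [Matrix.mul_apply]
          exact Finset.sum_congr rfl fun a _ => by rw [Matrix.transpose_apply]
        rw [h2, hZZ, Matrix.one_apply]
        by_cases h : i = j
        · subst h; simp
        · rw [if_neg (fun hh => h (by simpa using congrArg Fin.val hh)), if_neg h])
      (by
        intro x
        have h1 : ∑ i ∈ Finset.Ico (r+s) p, (∑ b, zc i b * x b) ^ 2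
            ≤ ∑ i ∈ Finset.range p, (∑ b, zc i b * x b) ^ 2 :=
          Finset.sum_le_sum_of_subset_of_nonneg
            (fun i hi => Finset.mem_range.mpr (Finset.mem_Ico.mp hi).2)
            (fun i _ _ => sq_nonneg _)
        have h2 : ∑ i ∈ Finset.range p, (∑ b, zc i b * x b) ^ 2
            = ∑ i : Fin p, (Zhᵀ *ᵥ x) i ^ 2 := by
          rw [← Fin.sum_univ_eq_sum_range (fun i => (∑ b, zc i b * x b) ^ 2) p]
          refine Finset.sum_congr rfl fun i _ => ?_
          congr 1
          rw [Matrix.mulVec, dotProduct]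
          refine Finset.sum_congr rfl fun b _ => ?_
          rw [Matrix.transpose_apply, hzcl i.1 b i.2]
        exact le_trans h1 (le_trans (le_of_eq h2) (transpose_contraction Zh hZZ x)))
      (by
        intro x
        have h0 : ∑ i ∈ Finset.Ico (r+s) p, (∑ b, wc i b * x b) ^ 2
            = ∑ i ∈ (Finset.Ico (r+s) p).filter (· < K), (∑ b, wc i b * x b) ^ 2 := by
          refine (Finset.sum_filter_of_ne fun i _ hne => ?_).symm
          by_contra hiK
          refine hne ?_
          have : ∀ b, wc i b * x b = 0 := fun b => by rw [hwc0 i b hiK, zero_mul]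
          rw [Finset.sum_congr rfl fun b _ => this b, Finset.sum_const_zero]
          norm_num
        have h1 : ∑ i ∈ (Finset.Ico (r+s) p).filter (· < K), (∑ b, wc i b * x b) ^ 2
            ≤ ∑ i ∈ Finset.range K, (∑ b, wc i b * x b) ^ 2 :=
          Finset.sum_le_sum_of_subset_of_nonneg
            (fun i hi => Finset.mem_range.mpr (Finset.mem_filter.mp hi).2)
            (fun i _ _ => sq_nonneg _)
        have h2 : ∑ i ∈ Finset.range K, (∑ b, wc i b * x b) ^ 2
            = ∑ i : Fin K, (Wbrᵀ *ᵥ x) i ^ 2 := by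
          rw [← Fin.sum_univ_eq_sum_range (fun i => (∑ b, wc i b * x b) ^ 2) K]
          refine Finset.sum_congr rfl fun i _ => ?_
          congr 1
          rw [Matrix.mulVec, dotProduct]
          refine Finset.sum_congr rfl fun b _ => ?_
          rw [Matrix.transpose_apply, hwcl i.1 b i.2]
        rw [h0]
        exact le_trans h1 (le_trans (le_of_eq h2) (transpose_contraction Wbr hWW x)))
      (by
        intro i hi
        obtain ⟨hi1, hi2⟩ := Finset.mem_Ico.mp hi
        have hu : 0 ≤ σe i ∧ σe i ≤ τ := by
          by_cases hiK : i < K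
          · rw [hσe_eq _ hiK]
            exact ⟨hσhnonneg i, le_trans (hσhanti _ _ hi1) (key1 (by omega) (by omega))⟩
          · rw [hσe_zero _ hiK]
            exact ⟨le_refl 0, hτ0⟩
        simpa only [hgC, two_mul] using coeff1 (σe i) τ hu.1 hu.2 hτ40)
      (by
        intro i hi
        obtain ⟨hi1, hi2⟩ := Finset.mem_Ico.mp hi
        have hu : 0 ≤ σe i ∧ σe i ≤ τ := by
          by_cases hiK : i < K
          · rw [hσe_eq _ hiK]
            exact ⟨hσhnonneg i, le_trans (hσhanti _ _ hi1) (key1 (by omega) (by omega))⟩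
          · rw [hσe_zero _ hiK]
            exact ⟨le_refl 0, hτ0⟩
        simpa only [hdC, two_mul] using coeff2 (σe i) τ hu.1 hu.2 hτ40)
    have hsq : Real.sqrt (2 * ((2*τ) ^ 2 + (2*τ) ^ 2)) = 4 * τ := by
      rw [show 2 * ((2*τ) ^ 2 + (2*τ) ^ 2) = (4*τ)^2 by ring, Real.sqrt_sq (by positivity)]
    have hfin : (4:ℝ) * τ ≤ 16 * τ / (1 - σ r) ^ 2 := by
      rw [le_div_iff₀ (by positivity)]
      have h1 : (1 - σ r) ^ 2 ≤ 1 := by nlinarith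
      nlinarith
    calc specNorm _ ≤ Real.sqrt (2 * ((2*τ) ^ 2 + (2*τ) ^ 2)) := hcore
      _ = 4 * τ := hsq
      _ ≤ 16 * τ / (1 - σ r) ^ 2 := hfin
    -- entrywise formula for PNh
  have hPNhE : ∀ (a b : Fin n), PNh a b
      = ∑ i ∈ Finset.Ico r K, ((1 - σf i ^ 2)⁻¹ * (wc i a * wc i b)
          - σf i * (1 - σf i ^ 2)⁻¹ * (wc i a * zc i b)) := by
    intro a b
    rw [hPNh, hNinv, Matrix.mul_assoc, Matrix.mul_apply, Fintype.sum_sum_type]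
    have hs1 : ∑ m : Fin (p-r), (Matrix.of fun (a : Fin n) (j : Fin (p - r) ⊕ Fin (K - r)) =>
        Sum.elim (fun _ : Fin (p - r) => (0 : ℝ))
                 (fun j' : Fin (K - r) => Wbr a ⟨r + j'.1, by have := j'.2; omega⟩) j)
          a (Sum.inl m) * (NN * Mhᵀ) (Sum.inl m) b = 0 := by
      refine Finset.sum_eq_zero fun m _ => ?_
      simp only [Matrix.of_apply, Sum.elim_inl, zero_mul]
    have hs2 : ∑ m : Fin (K-r), (Matrix.of fun (a : Fin n) (j : Fin (p - r) ⊕ Fin (K - r)) =>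
        Sum.elim (fun _ : Fin (p - r) => (0 : ℝ))
                 (fun j' : Fin (K - r) => Wbr a ⟨r + j'.1, by have := j'.2; omega⟩) j)
          a (Sum.inr m) * (NN * Mhᵀ) (Sum.inr m) b
        = ∑ t ∈ Finset.range (K - r), ((1 - σf (r + t) ^ 2)⁻¹ * (wc (r + t) a * wc (r + t) b)
          - σf (r + t) * (1 - σf (r + t) ^ 2)⁻¹ * (wc (r + t) a * zc (r + t) b)) := by
      rw [← Fin.sum_univ_eq_sum_range (fun t => ((1 - σf (r + t) ^ 2)⁻¹ * (wc (r + t) a * wc (r + t) b)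
          - σf (r + t) * (1 - σf (r + t) ^ 2)⁻¹ * (wc (r + t) a * zc (r + t) b))) (K - r)]
      refine Finset.sum_congr rfl fun m _ => ?_
      rw [hNMr m b]
      simp only [Matrix.of_apply, Sum.elim_inr]
      rw [← hwcl (r + m.1) a (by have := m.2; omega)]
      ring
    rw [hs1, hs2, zero_add, Finset.sum_Ico_eq_sum_range]
  -- entrywise formula for PNt
  have hPNtE : ∀ (a b : Fin n), PNt a b
      = (∑ i ∈ Finset.Ico r (r+s), (1 - σh i ^ 2)⁻¹ * (wc i a * wc i b))
        - (∑ i ∈ Finset.Ico r (r+s), (σh i / (1 - σh i ^ 2)) * (wc i a * zc i b))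
        + (∑ i ∈ Finset.Ico (r+s) K, wc i a * wc i b) := by
    intro a b
    rw [hPNt]
    rw [Matrix.add_apply, Matrix.sub_apply, Matrix.sum_apply, Matrix.sum_apply, Matrix.sum_apply]
    rw [← Finset.sum_attach (Finset.Ico r (r+s))
        (fun t => (1 - σh t ^ 2)⁻¹ * (wc t a * wc t b)),
      ← Finset.sum_attach (Finset.Ico r (r+s))
        (fun t => (σh t / (1 - σh t ^ 2)) * (wc t a * zc t b)),
      ← Finset.sum_attach (Finset.Ico (r+s) K) (fun t => wc t a * wc t b)]
    congr 1
    · congr 1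
      · refine Finset.sum_congr rfl fun i _ => ?_
        have hi := (Finset.mem_Ico.mp i.2).2
        rw [Matrix.smul_apply, Matrix.vecMulVec_apply, smul_eq_mul,
          hwcl i.1 a (by omega), hwcl i.1 b (by omega)]
      · refine Finset.sum_congr rfl fun i _ => ?_
        have hi := (Finset.mem_Ico.mp i.2).2
        rw [Matrix.smul_apply, Matrix.vecMulVec_apply, smul_eq_mul,
          hwcl i.1 a (by omega), hzcl i.1 b (by omega)]
    · refine Finset.sum_congr rfl fun i _ => ?_
      have hi := (Finset.mem_Ico.mp i.2).2
      rw [Matrix.vecMulVec_apply, hwcl i.1 a (by omega), hwcl i.1 b (by omega)]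
  -- the error matrix for PN
  set gN : ℕ → ℝ := fun i => (1 - σf i ^ 2)⁻¹ - 1 with hgN
  set dN : ℕ → ℝ := fun i => σf i * (1 - σf i ^ 2)⁻¹ with hdN
  have hEN : PNh - PNt = Matrix.of (fun a b : Fin n =>
      ∑ i ∈ Finset.Ico (r+s) K, (gN i * (wc i a * wc i b) - dN i * (wc i a * zc i b))) := by
    ext a b
    rw [Matrix.sub_apply, hPNhE a b, hPNtE a b, Matrix.of_apply]
    rw [← Finset.sum_Ico_consecutive
      (fun i => ((1 - σf i ^ 2)⁻¹ * (wc i a * wc i b)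
          - σf i * (1 - σf i ^ 2)⁻¹ * (wc i a * zc i b)))
      (show r ≤ r + s by omega) hrK]
    have hhead : ∑ i ∈ Finset.Ico r (r+s), ((1 - σf i ^ 2)⁻¹ * (wc i a * wc i b)
          - σf i * (1 - σf i ^ 2)⁻¹ * (wc i a * zc i b))
        = (∑ i ∈ Finset.Ico r (r+s), (1 - σh i ^ 2)⁻¹ * (wc i a * wc i b))
          - (∑ i ∈ Finset.Ico r (r+s), (σh i / (1 - σh i ^ 2)) * (wc i a * zc i b)) := by
      rw [← Finset.sum_sub_distrib]
      refine Finset.sum_congr rfl fun i hi => ?_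
      have hip : i < p := by have := (Finset.mem_Ico.mp hi).2; omega
      rw [hσf_eq _ hip, div_eq_mul_inv]
    have htail : ∑ i ∈ Finset.Ico (r+s) K, ((1 - σf i ^ 2)⁻¹ * (wc i a * wc i b)
          - σf i * (1 - σf i ^ 2)⁻¹ * (wc i a * zc i b))
          - ∑ i ∈ Finset.Ico (r+s) K, wc i a * wc i b
        = ∑ i ∈ Finset.Ico (r+s) K, (gN i * (wc i a * wc i b) - dN i * (wc i a * zc i b)) := by
      rw [← Finset.sum_sub_distrib]
      refine Finset.sum_congr rfl fun i hi => ?_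
      simp only [hgN, hdN]
      ring
    linarith [hhead, htail]
  -- bound for the PN part
  have hPNbound : specNorm (PNh - PNt) ≤ 16 * τ / (1 - σ r) ^ 2 := by
    rw [hEN]
    have hcore := core_bound n (Finset.Ico (r+s) K) wc zc gN dN (2*τ) (2*τ)
      (by positivity) (by positivity)
      (by
        intro i hi j hj
        obtain ⟨hi1, hi2⟩ := Finset.mem_Ico.mp hi
        obtain ⟨hj1, hj2⟩ := Finset.mem_Ico.mp hj
        have h1 : ∀ a, wc i a * wc j a = Wbr a ⟨i, hi2⟩ * Wbr a ⟨j, hj2⟩ := fun a => by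
          rw [hwcl i a hi2, hwcl j a hj2]
        rw [Finset.sum_congr rfl fun a _ => h1 a]
        have h2 : ∑ a, Wbr a ⟨i, hi2⟩ * Wbr a ⟨j, hj2⟩ = (Wbrᵀ * Wbr) ⟨i, hi2⟩ ⟨j, hj2⟩ := by
          rw [Matrix.mul_apply]
          exact Finset.sum_congr rfl fun a _ => by rw [Matrix.transpose_apply]
        rw [h2, hWW, Matrix.one_apply]
        by_cases h : i = j
        · subst h; simp
        · rw [if_neg (fun hh => h (by simpa using congrArg Fin.val hh)), if_neg h])
      (by
        intro x
        have h1 : ∑ i ∈ Finset.Ico (r+s) K, (∑ b, wc i b * x b) ^ 2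
            ≤ ∑ i ∈ Finset.range K, (∑ b, wc i b * x b) ^ 2 :=
          Finset.sum_le_sum_of_subset_of_nonneg
            (fun i hi => Finset.mem_range.mpr (Finset.mem_Ico.mp hi).2)
            (fun i _ _ => sq_nonneg _)
        have h2 : ∑ i ∈ Finset.range K, (∑ b, wc i b * x b) ^ 2
            = ∑ i : Fin K, (Wbrᵀ *ᵥ x) i ^ 2 := by
          rw [← Fin.sum_univ_eq_sum_range (fun i => (∑ b, wc i b * x b) ^ 2) K]
          refine Finset.sum_congr rfl fun i _ => ?_
          congr 1
          rw [Matrix.mulVec, dotProduct]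
          refine Finset.sum_congr rfl fun b _ => ?_
          rw [Matrix.transpose_apply, hwcl i.1 b i.2]
        exact le_trans h1 (le_trans (le_of_eq h2) (transpose_contraction Wbr hWW x)))
      (by
        intro x
        have h0 : ∑ i ∈ Finset.Ico (r+s) K, (∑ b, zc i b * x b) ^ 2
            = ∑ i ∈ (Finset.Ico (r+s) K).filter (· < p), (∑ b, zc i b * x b) ^ 2 := by
          refine (Finset.sum_filter_of_ne fun i _ hne => ?_).symm
          by_contra hip
          refine hne ?_
          have : ∀ b, zc i b * x b = 0 := fun b => by rw [hzc0 i b hip, zero_mul]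
          rw [Finset.sum_congr rfl fun b _ => this b, Finset.sum_const_zero]
          norm_num
        have h1 : ∑ i ∈ (Finset.Ico (r+s) K).filter (· < p), (∑ b, zc i b * x b) ^ 2
            ≤ ∑ i ∈ Finset.range p, (∑ b, zc i b * x b) ^ 2 :=
          Finset.sum_le_sum_of_subset_of_nonneg
            (fun i hi => Finset.mem_range.mpr (Finset.mem_filter.mp hi).2)
            (fun i _ _ => sq_nonneg _)
        have h2 : ∑ i ∈ Finset.range p, (∑ b, zc i b * x b) ^ 2
            = ∑ i : Fin p, (Zhᵀ *ᵥ x) i ^ 2 := by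
          rw [← Fin.sum_univ_eq_sum_range (fun i => (∑ b, zc i b * x b) ^ 2) p]
          refine Finset.sum_congr rfl fun i _ => ?_
          congr 1
          rw [Matrix.mulVec, dotProduct]
          refine Finset.sum_congr rfl fun b _ => ?_
          rw [Matrix.transpose_apply, hzcl i.1 b i.2]
        rw [h0]
        exact le_trans h1 (le_trans (le_of_eq h2) (transpose_contraction Zh hZZ x)))
      (by
        intro i hi
        obtain ⟨hi1, hi2⟩ := Finset.mem_Ico.mp hi
        have hu : 0 ≤ σf i ∧ σf i ≤ τ := by
          by_cases hip : i < p
          · rw [hσf_eq _ hip]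
            exact ⟨hσhnonneg i, le_trans (hσhanti _ _ hi1) (key1 (by omega) (by omega))⟩
          · rw [hσf_zero _ hip]
            exact ⟨le_refl 0, hτ0⟩
        simpa only [hgN, two_mul] using coeff1 (σf i) τ hu.1 hu.2 hτ40)
      (by
        intro i hi
        obtain ⟨hi1, hi2⟩ := Finset.mem_Ico.mp hi
        have hu : 0 ≤ σf i ∧ σf i ≤ τ := by
          by_cases hip : i < p
          · rw [hσf_eq _ hip]
            exact ⟨hσhnonneg i, le_trans (hσhanti _ _ hi1) (key1 (by omega) (by omega))⟩
          · rw [hσf_zero _ hip]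
            exact ⟨le_refl 0, hτ0⟩
        simpa only [hdN, two_mul] using coeff2 (σf i) τ hu.1 hu.2 hτ40)
    have hsq : Real.sqrt (2 * ((2*τ) ^ 2 + (2*τ) ^ 2)) = 4 * τ := by
      rw [show 2 * ((2*τ) ^ 2 + (2*τ) ^ 2) = (4*τ)^2 by ring, Real.sqrt_sq (by positivity)]
    have hfin : (4:ℝ) * τ ≤ 16 * τ / (1 - σ r) ^ 2 := by
      rw [le_div_iff₀ (by positivity)]
      have h1 : (1 - σ r) ^ 2 ≤ 1 := by nlinarith
      nlinarith
    calc specNorm _ ≤ Real.sqrt (2 * ((2*τ) ^ 2 + (2*τ) ^ 2)) := hcore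
      _ = 4 * τ := hsq
      _ ≤ 16 * τ / (1 - σ r) ^ 2 := hfin
  exact ⟨hPCbound, hPNbound⟩
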